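/- For every integer k ≥ 1, ∑_{n=1}^{F_{2k−1} − 1} ⌊φ² n⌋³ = (1/4)(F_{2k−1} − 1)(F_{2k+1} − 1) · (1/5)(L_{4k+2} − 5L_{2k+2} + 7). -/

import Mathlib

def lucas : ℕ → ℕ
  | 0 => 2
  | 1 => 1
  | n + 2 => lucas (n + 1) + lucas n

noncomputable def gr : ℝ := (1 + Real.sqrt 5) / 2
noncomputable def gc : ℝ := (1 - Real.sqrt 5) / 2

noncomputable def aseq (n : ℕ) : ℤ := ⌊gr ^ 2 * (n : ℝ)⌋

noncomputable def S (p m : ℕ) : ℝ := ∑ n ∈ Finset.range (Nat.fib m), ((aseq n : ℝ)) ^ p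

lemma s5 : Real.sqrt 5 ^ 2 = 5 := Real.sq_sqrt (by norm_num)

lemma s5gt2 : (2:ℝ) < Real.sqrt 5 := by nlinarith [s5, Real.sqrt_nonneg 5]

lemma s5lt3 : Real.sqrt 5 < 3 := by nlinarith [s5, Real.sqrt_nonneg 5]

lemma hf : gr ^ 2 = gr + 1 := by unfold gr; linear_combination (1/4) * s5

lemma hgc : gc = 1 - gr := by unfold gr gc; ring

lemma hgc2 : gc ^ 2 = gc + 1 := by unfold gc; linear_combination (1/4) * s5

lemma hgrgc : gr * gc = -1 := by unfold gr gc; linear_combination (-(1/4)) * s5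

lemma grpos : (0:ℝ) < gr := by unfold gr; nlinarith [s5gt2]

lemma gr1 : (1:ℝ) < gr := by unfold gr; nlinarith [s5gt2]

lemma gcneg : gc < 0 := by unfold gc; nlinarith [s5gt2]

lemma gcabs : |gc| < 1 := by
  rw [abs_lt]; constructor
  · unfold gc; nlinarith [s5lt3]
  · nlinarith [gcneg]

lemma hxz_odd (n : ℕ) (h : Odd n) : gr ^ n * gc ^ n = -1 := by
  rw [← mul_pow, hgrgc, h.neg_one_pow]

lemma hxz_even (n : ℕ) (h : Even n) : gr ^ n * gc ^ n = 1 := by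
  rw [← mul_pow, hgrgc, h.neg_one_pow]

lemma fibR (n : ℕ) : (Nat.fib n : ℝ) * (2 * gr - 1) = gr ^ n - gc ^ n := by
  induction n using Nat.twoStepInduction with
  | zero => simp
  | one => rw [Nat.fib_one]; push_cast; unfold gr gc; ring
  | more n ih1 ih2 =>
    rw [Nat.fib_add_two]
    push_cast
    linear_combination ih1 + ih2 - gr ^ n * hf + gc ^ n * hgc2

lemma h5sq : (2 * gr - 1) ^ 2 = 5 := by unfold gr; linear_combination s5

lemma fibR' (n : ℕ) : (Nat.fib n : ℝ) = (2 * gr - 1) / 5 * (gr ^ n - gc ^ n) := by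
  linear_combination ((2 * gr - 1) / 5) * fibR n - ((Nat.fib n : ℝ) / 5) * h5sq

lemma lucasR (n : ℕ) : (lucas n : ℝ) = gr ^ n + gc ^ n := by
  induction n using Nat.twoStepInduction with
  | zero => show ((2:ℕ):ℝ) = _; norm_num
  | one => show ((1:ℕ):ℝ) = _; push_cast; unfold gr gc; ring
  | more n ih1 ih2 =>
    show ((lucas (n+1) + lucas n : ℕ) : ℝ) = _
    push_cast
    linear_combination ih1 + ih2 - gr ^ n * hf - gc ^ n * hgc2

lemma sqrt5_irr : Irrational (Real.sqrt 5) := (by norm_num : Nat.Prime 5).irrational_sqrt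

lemma approx (j : ℕ) (hj : 1 ≤ j) (i : ℤ) :
    1 ≤ |(i : ℝ) - (j : ℝ) * gr| * (1 + Real.sqrt 5 * (j : ℝ)) := by
  have hj0 : (0:ℝ) < (j:ℝ) := by exact_mod_cast hj
  have hne : (i ^ 2 - i * j - j ^ 2 : ℤ) ≠ 0 := by
    intro h
    have h2 : ((2 * i - j) ^ 2 : ℤ) = 5 * (j:ℤ) ^ 2 := by linear_combination 4 * h
    have h3 : ((2 * i - (j:ℤ) : ℤ) : ℝ) ^ 2 = 5 * (j : ℝ) ^ 2 := by exact_mod_cast congrArg (Int.cast : ℤ → ℝ) h2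
    have h3' : (2 * (i:ℝ) - (j:ℝ)) ^ 2 = 5 * (j : ℝ) ^ 2 := by push_cast at h3; linarith
    have h4 : |2 * (i:ℝ) - (j:ℝ)| = Real.sqrt 5 * (j:ℝ) := by
      have hnn : (0:ℝ) ≤ Real.sqrt 5 * (j:ℝ) := by positivity
      calc |2 * (i:ℝ) - (j:ℝ)| = Real.sqrt ((2 * (i:ℝ) - (j:ℝ)) ^ 2) := (Real.sqrt_sq_eq_abs _).symm
        _ = Real.sqrt ((Real.sqrt 5 * (j:ℝ)) ^ 2) := by rw [h3', mul_pow, s5]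
        _ = Real.sqrt 5 * (j:ℝ) := Real.sqrt_sq hnn
    refine sqrt5_irr ⟨|2 * (i:ℚ) - (j:ℚ)| / (j : ℚ), ?_⟩
    push_cast
    rw [h4]
    field_simp
  have habs : (1:ℝ) ≤ |((i ^ 2 - i * j - j ^ 2 : ℤ) : ℝ)| := by
    have := Int.one_le_abs hne
    exact_mod_cast this
  have hsum : gr + gc = 1 := by unfold gr gc; ring
  have hfact : ((i ^ 2 - i * j - j ^ 2 : ℤ) : ℝ) = ((i:ℝ) - (j:ℝ) * gr) * ((i:ℝ) - (j:ℝ) * gc) := by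
    push_cast
    linear_combination ((i:ℝ) * (j:ℝ)) * hsum - ((j:ℝ)) ^ 2 * hgrgc
  have hgg : gr - gc = Real.sqrt 5 := by unfold gr gc; ring
  have htri : |(i:ℝ) - (j:ℝ) * gc| ≤ |(i:ℝ) - (j:ℝ) * gr| + Real.sqrt 5 * (j:ℝ) := by
    have hd : (i:ℝ) - (j:ℝ) * gc = ((i:ℝ) - (j:ℝ) * gr) + Real.sqrt 5 * (j:ℝ) := by
      rw [← hgg]; ring
    rw [hd]
    refine (abs_add_le _ _).trans ?_
    have habs5 : |Real.sqrt 5 * (j:ℝ)| = Real.sqrt 5 * (j:ℝ) := abs_of_nonneg (by positivity)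
    rw [habs5]
  have he : (0:ℝ) ≤ |(i:ℝ) - (j:ℝ) * gr| := abs_nonneg _
  have h1 : (1:ℝ) ≤ |(i:ℝ) - (j:ℝ) * gr| * |(i:ℝ) - (j:ℝ) * gc| := by
    rw [← abs_mul, ← hfact]; exact habs
  have hs5 : (0:ℝ) ≤ Real.sqrt 5 := Real.sqrt_nonneg 5
  rcases le_or_gt (|(i:ℝ) - (j:ℝ) * gr|) 1 with hc | hc
  · nlinarith [mul_le_mul_of_nonneg_left htri he]
  · nlinarith [mul_nonneg hs5 hj0.le]

lemma fracHigh (j : ℕ) (hj : 1 ≤ j) :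
    1 ≤ ((⌊gr * (j:ℝ)⌋ : ℝ) + 1 - gr * (j:ℝ)) * (1 + Real.sqrt 5 * (j:ℝ)) := by
  have h := approx j hj (⌊gr * (j:ℝ)⌋ + 1)
  have hlt : gr * (j:ℝ) < (⌊gr * (j:ℝ)⌋ : ℝ) + 1 := Int.lt_floor_add_one _
  rw [show ((⌊gr * (j:ℝ)⌋ + 1 : ℤ) : ℝ) - (j:ℝ) * gr = (⌊gr * (j:ℝ)⌋ : ℝ) + 1 - gr * (j:ℝ) by
    push_cast; ring] at h
  rwa [abs_of_nonneg (by linarith)] at h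

lemma fracLow (j : ℕ) (hj : 1 ≤ j) :
    1 ≤ (gr * (j:ℝ) - (⌊gr * (j:ℝ)⌋ : ℝ)) * (1 + Real.sqrt 5 * (j:ℝ)) := by
  have h := approx j hj ⌊gr * (j:ℝ)⌋
  have hle : (⌊gr * (j:ℝ)⌋ : ℝ) ≤ gr * (j:ℝ) := Int.floor_le _
  rw [show ((⌊gr * (j:ℝ)⌋ : ℤ) : ℝ) - (j:ℝ) * gr = -(gr * (j:ℝ) - (⌊gr * (j:ℝ)⌋ : ℝ)) by push_cast; ring,
    abs_neg] at h
  rwa [abs_of_nonneg (by linarith)] at h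

lemma bnd (m j : ℕ) (hj : j < Nat.fib m) : 1 + Real.sqrt 5 * (j:ℝ) < gr ^ (m+1) := by
  have h1 : (j:ℝ) ≤ (Nat.fib m : ℝ) - 1 := by
    have : (j:ℝ) + 1 ≤ (Nat.fib m : ℝ) := by exact_mod_cast hj
    linarith
  have h5 : Real.sqrt 5 = 2 * gr - 1 := by unfold gr; ring
  have h2 : Real.sqrt 5 * (Nat.fib m : ℝ) = gr ^ m - gc ^ m := by
    rw [h5, mul_comm]; exact fibR m
  have h3 : |gc ^ m| ≤ 1 := by
    rw [abs_pow]; exact pow_le_one₀ (abs_nonneg _) (le_of_lt gcabs)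
  have h4 := abs_le.mp h3
  have h7 : gr ^ m ≤ gr ^ (m+1) := pow_le_pow_right₀ (le_of_lt gr1) (Nat.le_succ m)
  have hs5 : (0:ℝ) ≤ Real.sqrt 5 := Real.sqrt_nonneg 5
  nlinarith [mul_le_mul_of_nonneg_left h1 hs5, s5gt2]

lemma aseq_def (n : ℕ) : aseq n = ⌊gr ^ 2 * (n:ℝ)⌋ := rfl

lemma aseq_zero : aseq 0 = 0 := by unfold aseq; norm_num

lemma aseq_split (j : ℕ) : aseq j = ⌊gr * (j:ℝ)⌋ + j := by
  unfold aseq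
  rw [show gr ^ 2 * (j:ℝ) = gr * (j:ℝ) + ((j:ℤ) : ℝ) by push_cast; linear_combination (j:ℝ) * hf,
    Int.floor_add_intCast]

lemma hFshift (m : ℕ) : gr ^ 2 * (Nat.fib m : ℝ) = (Nat.fib (m+2) : ℝ) - gc ^ m := by
  rw [fibR' m, fibR' (m+2)]
  linear_combination ((-1/5)*gc ^ m + (-1/5)*gc*gc ^ m + (3/5)*gr*gc ^ m + (2/5)*gr*gc*gc ^ m + (-2/5)*gr^2*gc ^ m) * hgc + ((-4/5)*gc ^ m) * hf


lemma floor_core_odd (l j : ℕ) (hl : Even l) (hj : j < Nat.fib l) :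
    ⌊gr ^ 2 * (j:ℝ) - gc ^ (l+1)⌋ = aseq j := by
  have hm : Odd (l+1) := hl.add_one
  have hneg : gc ^ (l+1) < 0 := Odd.pow_neg hm gcneg
  have hle : ((aseq j : ℤ) : ℝ) ≤ gr ^ 2 * (j:ℝ) := Int.floor_le _
  have hlt : gr ^ 2 * (j:ℝ) < (aseq j : ℝ) + 1 := Int.lt_floor_add_one _
  have hsplitR : gr ^ 2 * (j:ℝ) = gr * (j:ℝ) + (j:ℝ) := by linear_combination (j:ℝ) * hf
  have hsplit : (aseq j : ℝ) = (⌊gr * (j:ℝ)⌋ : ℝ) + (j:ℝ) := by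
    rw [aseq_split]; push_cast; ring
  rw [Int.floor_eq_iff]
  refine ⟨by linarith, ?_⟩
  rcases Nat.eq_zero_or_pos j with rfl | hj1
  · have h1 : |gc ^ (l+1)| < 1 := by
      rw [abs_pow]; exact pow_lt_one₀ (abs_nonneg _) gcabs (Nat.succ_ne_zero l)
    have h2 := neg_abs_le (gc ^ (l+1))
    push_cast
    simp only [mul_zero]
    rw [aseq_zero]
    push_cast
    linarith
  · have hF := fracHigh j hj1
    have hB := bnd l j hj
    have hxz := hxz_odd (l+1) hm
    have hd : (-gc ^ (l+1)) * gr ^ (l+1) = 1 := by linear_combination -hxz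
    have hdpos : 0 < -gc ^ (l+1) := by linarith
    have hBpos : (0:ℝ) < 1 + Real.sqrt 5 * (j:ℝ) := by positivity
    have hkey : -gc ^ (l+1) < (⌊gr * (j:ℝ)⌋ : ℝ) + 1 - gr * (j:ℝ) := by
      nlinarith [mul_lt_mul_of_pos_left hB hdpos]
    rw [hsplit]
    linarith

lemma floor_core_even (l j : ℕ) (hl : Odd l) (hj1 : 1 ≤ j) (hj : j < Nat.fib l) :
    ⌊gr ^ 2 * (j:ℝ) - gc ^ (l+1)⌋ = aseq j := by
  have hm : Even (l+1) := hl.add_one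
  have hpos : 0 < gc ^ (l+1) := hm.pow_pos (ne_of_lt gcneg)
  have hle : ((aseq j : ℤ) : ℝ) ≤ gr ^ 2 * (j:ℝ) := Int.floor_le _
  have hlt : gr ^ 2 * (j:ℝ) < (aseq j : ℝ) + 1 := Int.lt_floor_add_one _
  have hsplitR : gr ^ 2 * (j:ℝ) = gr * (j:ℝ) + (j:ℝ) := by linear_combination (j:ℝ) * hf
  have hsplit : (aseq j : ℝ) = (⌊gr * (j:ℝ)⌋ : ℝ) + (j:ℝ) := by
    rw [aseq_split]; push_cast; ring
  rw [Int.floor_eq_iff]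
  constructor
  · have hF := fracLow j hj1
    have hB := bnd l j hj
    have hxz := hxz_even (l+1) hm
    have hBpos : (0:ℝ) < 1 + Real.sqrt 5 * (j:ℝ) := by positivity
    have hkey : gc ^ (l+1) < gr * (j:ℝ) - (⌊gr * (j:ℝ)⌋ : ℝ) := by
      nlinarith [mul_lt_mul_of_pos_left hB hpos]
    rw [hsplit]
    linarith
  · linarith

lemma shift_odd (l j : ℕ) (hl : Even l) (hj : j < Nat.fib l) :
    aseq (Nat.fib (l+1) + j) = Nat.fib (l+3) + aseq j := by
  have hkey := hFshift (l+1)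
  rw [show l+1+2 = l+3 by omega] at hkey
  have harg : gr ^ 2 * ((Nat.fib (l+1) + j : ℕ) : ℝ)
      = (gr ^ 2 * (j:ℝ) - gc ^ (l+1)) + ((Nat.fib (l+3) : ℤ) : ℝ) := by
    push_cast
    push_cast at hkey
    linear_combination hkey
  rw [aseq_def, harg, Int.floor_add_intCast, floor_core_odd l j hl hj]
  push_cast
  ring

lemma shift_even (l j : ℕ) (hl : Odd l) (hj1 : 1 ≤ j) (hj : j < Nat.fib l) :
    aseq (Nat.fib (l+1) + j) = Nat.fib (l+3) + aseq j := by
  have hkey := hFshift (l+1)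
  rw [show l+1+2 = l+3 by omega] at hkey
  have harg : gr ^ 2 * ((Nat.fib (l+1) + j : ℕ) : ℝ)
      = (gr ^ 2 * (j:ℝ) - gc ^ (l+1)) + ((Nat.fib (l+3) : ℤ) : ℝ) := by
    push_cast
    push_cast at hkey
    linear_combination hkey
  rw [aseq_def, harg, Int.floor_add_intCast, floor_core_even l j hl hj1 hj]
  push_cast
  ring

lemma shift_even0 (l : ℕ) (hl : Odd l) :
    aseq (Nat.fib (l+1)) = Nat.fib (l+3) - 1 := by
  have hm : Even (l+1) := hl.add_one
  have hpos : 0 < gc ^ (l+1) := hm.pow_pos (ne_of_lt gcneg)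
  have h1 : |gc ^ (l+1)| < 1 := by
    rw [abs_pow]; exact pow_lt_one₀ (abs_nonneg _) gcabs (Nat.succ_ne_zero l)
  have h2 : gc ^ (l+1) < 1 := lt_of_le_of_lt (le_abs_self _) h1
  have hkey := hFshift (l+1)
  rw [show l+1+2 = l+3 by omega] at hkey
  have harg : gr ^ 2 * ((Nat.fib (l+1) : ℕ) : ℝ)
      = (-gc ^ (l+1)) + ((Nat.fib (l+3) : ℤ) : ℝ) := by
    push_cast
    push_cast at hkey
    linear_combination hkey
  rw [aseq_def, harg, Int.floor_add_intCast]
  have hfl : ⌊-gc ^ (l+1)⌋ = -1 := by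
    rw [Int.floor_eq_iff]
    constructor
    · push_cast; linarith
    · push_cast; linarith
  rw [hfl]
  ring

lemma recur_odd (l : ℕ) (hl : Even l) (p : ℕ) :
    S p (l+2) = S p (l+1) + ∑ i ∈ Finset.range (Nat.fib l), ((Nat.fib (l+3) : ℝ) + (aseq i : ℝ)) ^ p := by
  unfold S
  rw [show Nat.fib (l+2) = Nat.fib (l+1) + Nat.fib l by rw [Nat.fib_add_two]; omega,
    Finset.sum_range_add]
  congr 1
  refine Finset.sum_congr rfl fun i hi => ?_
  rw [shift_odd l i hl (Finset.mem_range.mp hi)]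
  push_cast
  ring

lemma recur_even (l : ℕ) (hl : Odd l) (p : ℕ) :
    S p (l+2) = S p (l+1) + (((Nat.fib (l+3) : ℝ) - 1) ^ p - ((Nat.fib (l+3) : ℝ)) ^ p)
      + ∑ i ∈ Finset.range (Nat.fib l), ((Nat.fib (l+3) : ℝ) + (aseq i : ℝ)) ^ p := by
  have hl1 : 1 ≤ l := by
    rcases hl with ⟨t, ht⟩; omega
  have hpos : 0 < Nat.fib l := Nat.fib_pos.mpr hl1
  unfold S
  rw [show Nat.fib (l+2) = Nat.fib (l+1) + Nat.fib l by rw [Nat.fib_add_two]; omega,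
    Finset.sum_range_add]
  have split1 : (∑ i ∈ Finset.range (Nat.fib l), ((aseq (Nat.fib (l+1) + i) : ℝ)) ^ p)
      = ((aseq (Nat.fib (l+1) + 0) : ℝ)) ^ p
        + ∑ i ∈ Finset.Ico 1 (Nat.fib l), ((aseq (Nat.fib (l+1) + i) : ℝ)) ^ p := by
    rw [Finset.range_eq_Ico]
    exact Finset.sum_eq_sum_Ico_succ_bot hpos _
  have split2 : (∑ i ∈ Finset.range (Nat.fib l), ((Nat.fib (l+3) : ℝ) + (aseq i : ℝ)) ^ p)
      = ((Nat.fib (l+3) : ℝ) + (aseq 0 : ℝ)) ^ p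
        + ∑ i ∈ Finset.Ico 1 (Nat.fib l), ((Nat.fib (l+3) : ℝ) + (aseq i : ℝ)) ^ p := by
    rw [Finset.range_eq_Ico]
    exact Finset.sum_eq_sum_Ico_succ_bot hpos _
  rw [split1, split2]
  have hmain : ∀ i ∈ Finset.Ico 1 (Nat.fib l),
      ((aseq (Nat.fib (l+1) + i) : ℝ)) ^ p = ((Nat.fib (l+3) : ℝ) + (aseq i : ℝ)) ^ p := by
    intro i hi
    obtain ⟨h1, h2⟩ := Finset.mem_Ico.mp hi
    rw [shift_even l i hl h1 h2]
    push_cast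
    ring
  rw [Finset.sum_congr rfl hmain, add_zero, shift_even0 l hl, aseq_zero]
  push_cast
  ring

lemma expand1 (m : ℕ) (A : ℝ) :
    ∑ i ∈ Finset.range (Nat.fib m), (A + (aseq i : ℝ)) ^ 1
      = (Nat.fib m : ℝ) * A + S 1 m := by
  unfold S
  induction (Nat.fib m) with
  | zero => simp
  | succ n ih =>
    rw [Finset.sum_range_succ, Finset.sum_range_succ, ih]
    push_cast
    ring

lemma expand2 (m : ℕ) (A : ℝ) :
    ∑ i ∈ Finset.range (Nat.fib m), (A + (aseq i : ℝ)) ^ 2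
      = (Nat.fib m : ℝ) * A ^ 2 + 2 * A * S 1 m + S 2 m := by
  unfold S
  induction (Nat.fib m) with
  | zero => simp
  | succ n ih =>
    rw [Finset.sum_range_succ, Finset.sum_range_succ, Finset.sum_range_succ, ih]
    push_cast
    ring

lemma expand3 (m : ℕ) (A : ℝ) :
    ∑ i ∈ Finset.range (Nat.fib m), (A + (aseq i : ℝ)) ^ 3
      = (Nat.fib m : ℝ) * A ^ 3 + 3 * A ^ 2 * S 1 m + 3 * A * S 2 m + S 3 m := by
  unfold S
  induction (Nat.fib m) with
  | zero => simp
  | succ n ih =>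
    rw [Finset.sum_range_succ, Finset.sum_range_succ, Finset.sum_range_succ,
      Finset.sum_range_succ, ih]
    push_cast
    ring

lemma S_one_1 : S 1 1 = 0 := by unfold S; rw [Nat.fib_one]; simp [aseq_zero]
lemma S_two_1 : S 2 1 = 0 := by unfold S; rw [Nat.fib_one]; simp [aseq_zero]
lemma S_three_1 : S 3 1 = 0 := by unfold S; rw [Nat.fib_one]; simp [aseq_zero]
lemma S_one_2 : S 1 2 = 0 := by unfold S; rw [Nat.fib_two]; simp [aseq_zero]
lemma S_two_2 : S 2 2 = 0 := by unfold S; rw [Nat.fib_two]; simp [aseq_zero]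
lemma S_three_2 : S 3 2 = 0 := by unfold S; rw [Nat.fib_two]; simp [aseq_zero]


set_option maxHeartbeats 4000000 in
lemma main : ∀ j : ℕ,
    (S 1 (2*j+1) = ((4/5) + (-1/2)*(gc^(2*j+1)) + (1/5)*(gc^(2*j+1))^2 + (1/10)*(gr^(2*j+1))^2 + (1/2)*gr*(gc^(2*j+1)) + (-1/10)*gr*(gc^(2*j+1))^2 + (-1/2)*gr*(gr^(2*j+1)) + (1/10)*gr*(gr^(2*j+1))^2) ∧ S 2 (2*j+1) = ((-1) + (151/150)*(gc^(2*j+1)) + (-7/10)*(gc^(2*j+1))^2 + (11/75)*(gc^(2*j+1))^3 + (29/150)*(gr^(2*j+1)) + (-3/10)*(gr^(2*j+1))^2 + (4/75)*(gr^(2*j+1))^3 + (-61/75)*gr*(gc^(2*j+1)) + (2/5)*gr*(gc^(2*j+1))^2 + (-7/75)*gr*(gc^(2*j+1))^3 + (61/75)*gr*(gr^(2*j+1)) + (-2/5)*gr*(gr^(2*j+1))^2 + (7/75)*gr*(gr^(2*j+1))^3) ∧ S 3 (2*j+1) = ((67/50) + (-17/10)*(gc^(2*j+1)) + (179/100)*(gc^(2*j+1))^2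 + (-4/5)*(gc^(2*j+1))^3 + (13/100)*(gc^(2*j+1))^4 + (-2/5)*(gr^(2*j+1)) + (73/100)*(gr^(2*j+1))^2 + (-3/10)*(gr^(2*j+1))^3 + (1/20)*(gr^(2*j+1))^4 + (13/10)*gr*(gc^(2*j+1)) + (-53/50)*gr*(gc^(2*j+1))^2 + (1/2)*gr*(gc^(2*j+1))^3 + (-2/25)*gr*(gc^(2*j+1))^4 + (-13/10)*gr*(gr^(2*j+1)) + (53/50)*gr*(gr^(2*j+1))^2 + (-1/2)*gr*(gr^(2*j+1))^3 + (2/25)*gr*(gr^(2*j+1))^4)) ∧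
    (S 1 (2*j+2) = ((1/5) + (-1/2)*(gc^(2*j+2)) + (1/5)*(gc^(2*j+2))^2 + (1/10)*(gr^(2*j+2))^2 + (1/2)*gr*(gc^(2*j+2)) + (-1/10)*gr*(gc^(2*j+2))^2 + (-1/2)*gr*(gr^(2*j+2)) + (1/10)*gr*(gr^(2*j+2))^2) ∧ S 2 (2*j+2) = ((109/150)*(gc^(2*j+2)) + (-7/10)*(gc^(2*j+2))^2 + (11/75)*(gc^(2*j+2))^3 + (11/150)*(gr^(2*j+2)) + (-3/10)*(gr^(2*j+2))^2 + (4/75)*(gr^(2*j+2))^3 + (-49/75)*gr*(gc^(2*j+2)) + (2/5)*gr*(gc^(2*j+2))^2 + (-7/75)*gr*(gc^(2*j+2))^3 + (49/75)*gr*(gr^(2*j+2)) + (-2/5)*gr*(gr^(2*j+2))^2 + (7/75)*gr*(gr^(2*j+2))^3) ∧ S 3 (2*j+2) = ((-23/50) + (-4/5)*(gc^(2*j+2)) + (161/100)*(gc^(2*j+2))^2 + (-4/5)*(gc^(2*j+2))^3 + (13/100)*(gc^(2*j+2))^4 + (-1/10)*(gr^(2*j+2)) + (67/100)*(gr^(2*j+2))^2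 + (-3/10)*(gr^(2*j+2))^3 + (1/20)*(gr^(2*j+2))^4 + (7/10)*gr*(gc^(2*j+2)) + (-47/50)*gr*(gc^(2*j+2))^2 + (1/2)*gr*(gc^(2*j+2))^3 + (-2/25)*gr*(gc^(2*j+2))^4 + (-7/10)*gr*(gr^(2*j+2)) + (47/50)*gr*(gr^(2*j+2))^2 + (-1/2)*gr*(gr^(2*j+2))^3 + (2/25)*gr*(gr^(2*j+2))^4)) := by
  intro j
  induction j with
  | zero =>
    refine ⟨⟨?_, ?_, ?_⟩, ?_, ?_, ?_⟩
    · rw [S_one_1]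
      linear_combination ((3/10) + (-1/5)*gc + (-1/5)*gr + (1/10)*gr*gc + (-1/10)*gr^2) * hgc + ((1/2)) * hf
    · rw [S_two_1]
      linear_combination ((-34/75) + (83/150)*gc + (-11/75)*gc^2 + (1/10)*gr + (-4/25)*gr*gc + (7/75)*gr*gc^2 + (1/15)*gr^2 + (-7/75)*gr^2*gc + (7/75)*gr^3) * hgc + ((-41/75) + (14/75)*gr + (-14/75)*gr^2) * hf
    · rw [S_three_1]
      linear_combination ((29/50) + (-28/25)*gc + (67/100)*gc^2 + (-13/100)*gc^3 + (-2/25)*gr + (1/10)*gr*gc + (-29/100)*gr*gc^2 + (2/25)*gr*gc^3 + (11/100)*gr^2 + (21/100)*gr^2*gc + (-2/25)*gr^2*gc^2 + (-13/100)*gr^3 + (2/25)*gr^3*gc + (-2/25)*gr^4) * hgc + ((19/25) + (-1/2)*gr + (1/2)*gr^2) * hf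
    · rw [S_one_2]
      linear_combination ((3/10) + (3/10)*gc + (-1/5)*gc^2 + (-1/5)*gc^3 + (-3/10)*gr + (3/10)*gr*gc^2 + (1/10)*gr*gc^3 + (-2/5)*gr^2 + (-2/5)*gr^2*gc + (-1/10)*gr^2*gc^2 + (1/2)*gr^3 + (1/10)*gr^3*gc + (-1/10)*gr^4) * hgc + ((-1/10) + (7/10)*gr + (-7/10)*gr^2) * hf
    · rw [S_two_2]
      linear_combination ((-13/75) + (-13/75)*gc + (83/150)*gc^2 + (83/150)*gc^3 + (-11/75)*gc^4 + (-11/75)*gc^5 + (-22/75)*gr + (-7/15)*gr*gc + (-17/30)*gr*gc^2 + (-1/75)*gr*gc^3 + (6/25)*gr*gc^4 + (7/75)*gr*gc^5 + (107/150)*gr^2 + (37/150)*gr^2*gc + (-8/25)*gr^2*gc^2 + (-1/3)*gr^2*gc^3 + (-7/75)*gr^2*gc^4 + (1/2)*gr^3 + (56/75)*gr^3*gc + (32/75)*gr^3*gc^2 + (7/75)*gr^3*gc^3 + (-19/15)*gr^4 + (-13/25)*gr^4*gc + (-7/75)*gr^4*gc^2 + (46/75)*gr^5 + (7/75)*gr^5*gc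 + (-7/75)*gr^6) * hgc + ((13/75) + (-4/75)*gr + (-53/75)*gr^2 + (38/25)*gr^3 + (-19/25)*gr^4) * hf
    · rw [S_three_2]
      linear_combination ((-7/50) + (-7/50)*gc + (-47/50)*gc^2 + (-47/50)*gc^3 + (67/100)*gc^4 + (67/100)*gc^5 + (-13/100)*gc^6 + (-13/100)*gc^7 + (19/25)*gr + (31/50)*gr*gc + (19/50)*gr*gc^2 + (-14/25)*gr*gc^3 + (-83/100)*gr*gc^4 + (-4/25)*gr*gc^5 + (21/100)*gr*gc^6 + (2/25)*gr*gc^7 + (13/50)*gr^2 + (22/25)*gr^2*gc + (63/50)*gr^2*gc^2 + (7/10)*gr^2*gc^3 + (-13/100)*gr^2*gc^4 + (-29/100)*gr^2*gc^5 + (-2/25)*gr^2*gc^6 + (-117/50)*gr^3 + (-73/50)*gr^3*gc + (-1/5)*gr^3*gc^2 + (1/2)*gr^3*gc^3 + (37/100)*gr^3*gc^4 + (2/25)*gr^3*gc^5 + (71/100)*gr^4 + (-3/4)*gr^4*gc + (-19/20)*gr^4*gc^2 + (-9/20)*gr^4*gc^3 + (-2/25)*gr^4*gc^4 + (223/100)*gr^5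 + (37/25)*gr^5*gc + (53/100)*gr^5*gc^2 + (2/25)*gr^5*gc^3 + (-209/100)*gr^6 + (-61/100)*gr^6*gc + (-2/25)*gr^6*gc^2 + (69/100)*gr^7 + (2/25)*gr^7*gc + (-2/25)*gr^8) * hgc + ((-8/25) + (-29/50)*gr + (33/50)*gr^2 + (33/50)*gr^3 + (-119/50)*gr^4 + (123/50)*gr^5 + (-41/50)*gr^6) * hf
  | succ j ih =>
    obtain ⟨⟨ih1o, ih2o, ih3o⟩, ih1e, ih2e, ih3e⟩ := ih
    have hodd : Odd (2*j+1) := Nat.odd_iff.mpr (by omega)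
    have hxzo := hxz_odd (2*j+1) hodd
    have heven : Even (2*j+2) := Nat.even_iff.mpr (by omega)
    have hxze := hxz_even (2*j+2) heven
    have eo1 : S 1 (2*j+3) = ((4/5) + (-1/2)*(gc^(2*j+3)) + (1/5)*(gc^(2*j+3))^2 + (1/10)*(gr^(2*j+3))^2 + (1/2)*gr*(gc^(2*j+3)) + (-1/10)*gr*(gc^(2*j+3))^2 + (-1/2)*gr*(gr^(2*j+3)) + (1/10)*gr*(gr^(2*j+3))^2) := by
      have hrec := recur_even (2*j+1) hodd 1
      rw [show 2*j+1+2 = 2*j+3 by omega, show 2*j+1+3 = 2*j+4 by omega,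
        show 2*j+1+1 = 2*j+2 by omega] at hrec
      rw [hrec, expand1 (2*j+1), ih1o, ih1e, fibR' (2*j+4), fibR' (2*j+1)]
      have hxz := hxzo
      linear_combination ((1/25)*(gc^(2*j+1))^2 + (-1/25)*(gr^(2*j+1))*(gc^(2*j+1)) + (1/2)*gc*(gc^(2*j+1)) + (1/25)*gc*(gc^(2*j+1))^2 + (-1/25)*gc*(gr^(2*j+1))*(gc^(2*j+1)) + (-4/25)*gc^2*(gc^(2*j+1))^2 + (-1/25)*gc^2*(gr^(2*j+1))*(gc^(2*j+1)) + (-1/5)*gc^3*(gc^(2*j+1))^2 + (-1/2)*gr*(gc^(2*j+1)) + (4/25)*gr*(gc^(2*j+1))^2 + (6/25)*gr*(gr^(2*j+1))*(gc^(2*j+1)) + (-1/2)*gr*gc*(gc^(2*j+1)) + (1/5)*gr*gc*(gc^(2*j+1))^2 + (1/5)*gr*gc*(gr^(2*j+1))*(gc^(2*j+1)) + (7/50)*gr*gc^2*(gc^(2*j+1))^2 + (4/25)*gr*gc^2*(gr^(2*j+1))*(gc^(2*j+1)) + (1/10)*gr*gc^3*(gc^(2*j+1))^2 + (1/2)*gr^2*(gc^(2*j+1))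 + (-7/25)*gr^2*(gc^(2*j+1))^2 + (-13/25)*gr^2*(gr^(2*j+1))*(gc^(2*j+1)) + (-2/25)*gr^2*gc*(gc^(2*j+1))^2 + (-8/25)*gr^2*gc*(gr^(2*j+1))*(gc^(2*j+1)) + (3/50)*gr^2*gc^2*(gc^(2*j+1))^2 + (-4/25)*gr^2*gc^2*(gr^(2*j+1))*(gc^(2*j+1)) + (1/50)*gr^3*(gc^(2*j+1))^2 + (12/25)*gr^3*(gr^(2*j+1))*(gc^(2*j+1)) + (-3/50)*gr^3*gc*(gc^(2*j+1))^2 + (4/25)*gr^3*gc*(gr^(2*j+1))*(gc^(2*j+1)) + (3/50)*gr^4*(gc^(2*j+1))^2 + (-4/25)*gr^4*(gr^(2*j+1))*(gc^(2*j+1))) * hgc + ((1/2)*(gc^(2*j+1)) + (-6/25)*(gc^(2*j+1))^2 + (-19/25)*(gr^(2*j+1))*(gc^(2*j+1)) + (-1/10)*(gr^(2*j+1))^2 + (-1/2)*gr*(gc^(2*j+1)) + (11/50)*gr*(gc^(2*j+1))^2 + (1/2)*gr*(gr^(2*j+1)) + (12/25)*gr*(gr^(2*j+1))*(gc^(2*j+1))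 + (-1/50)*gr^2*(gc^(2*j+1))^2 + (-12/25)*gr^2*(gr^(2*j+1))*(gc^(2*j+1)) + (-1/5)*gr^2*(gr^(2*j+1))^2 + (-3/50)*gr^3*(gc^(2*j+1))^2 + (3/50)*gr^3*(gr^(2*j+1))^2) * hf + ((-4/5)) * hxz
    have eo2 : S 2 (2*j+3) = ((-1) + (151/150)*(gc^(2*j+3)) + (-7/10)*(gc^(2*j+3))^2 + (11/75)*(gc^(2*j+3))^3 + (29/150)*(gr^(2*j+3)) + (-3/10)*(gr^(2*j+3))^2 + (4/75)*(gr^(2*j+3))^3 + (-61/75)*gr*(gc^(2*j+3)) + (2/5)*gr*(gc^(2*j+3))^2 + (-7/75)*gr*(gc^(2*j+3))^3 + (61/75)*gr*(gr^(2*j+3)) + (-2/5)*gr*(gr^(2*j+3))^2 + (7/75)*gr*(gr^(2*j+3))^3) := by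
      have hrec := recur_even (2*j+1) hodd 2
      rw [show 2*j+1+2 = 2*j+3 by omega, show 2*j+1+3 = 2*j+4 by omega,
        show 2*j+1+1 = 2*j+2 by omega] at hrec
      rw [hrec, expand2 (2*j+1), ih1o, ih2o, ih2e, fibR' (2*j+4), fibR' (2*j+1)]
      have hxz := hxzo
      linear_combination ((-9/25)*(gc^(2*j+1)) + (-1/5)*(gc^(2*j+1))^2 + (11/125)*(gc^(2*j+1))^3 + (-1/125)*(gr^(2*j+1))*(gc^(2*j+1))^2 + (1/25)*(gr^(2*j+1))^2*(gc^(2*j+1)) + (-163/150)*gc*(gc^(2*j+1)) + (-1/5)*gc*(gc^(2*j+1))^2 + (11/125)*gc*(gc^(2*j+1))^3 + (-1/125)*gc*(gr^(2*j+1))*(gc^(2*j+1))^2 + (1/25)*gc*(gr^(2*j+1))^2*(gc^(2*j+1)) + (-2/25)*gc^2*(gc^(2*j+1)) + (1/2)*gc^2*(gc^(2*j+1))^2 + (11/125)*gc^2*(gc^(2*j+1))^3 + (-1/125)*gc^2*(gr^(2*j+1))*(gc^(2*j+1))^2 + (1/25)*gc^2*(gr^(2*j+1))^2*(gc^(2*j+1))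 + (7/10)*gc^3*(gc^(2*j+1))^2 + (-52/375)*gc^3*(gc^(2*j+1))^3 + (-1/125)*gc^3*(gr^(2*j+1))*(gc^(2*j+1))^2 + (-52/375)*gc^4*(gc^(2*j+1))^3 + (-1/125)*gc^4*(gr^(2*j+1))*(gc^(2*j+1))^2 + (-52/375)*gc^5*(gc^(2*j+1))^3 + (-1/125)*gc^5*(gr^(2*j+1))*(gc^(2*j+1))^2 + (223/150)*gr*(gc^(2*j+1)) + (-2/5)*gr*(gc^(2*j+1))^2 + (-1/125)*gr*(gc^(2*j+1))^3 + (-1/5)*gr*(gr^(2*j+1))*(gc^(2*j+1)) + (11/125)*gr*(gr^(2*j+1))*(gc^(2*j+1))^2 + (-3/25)*gr*(gr^(2*j+1))^2*(gc^(2*j+1)) + (79/75)*gr*gc*(gc^(2*j+1)) + (-3/5)*gr*gc*(gc^(2*j+1))^2 + (2/25)*gr*gc*(gc^(2*j+1))^3 + (-1/5)*gr*gc*(gr^(2*j+1))*(gc^(2*j+1)) + (2/25)*gr*gc*(gr^(2*j+1))*(gc^(2*j+1))^2 + (-2/25)*gr*gc*(gr^(2*j+1))^2*(gc^(2*j+1))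 + (4/25)*gr*gc^2*(gc^(2*j+1)) + (-1/2)*gr*gc^2*(gc^(2*j+1))^2 + (21/125)*gr*gc^2*(gc^(2*j+1))^3 + (-1/5)*gr*gc^2*(gr^(2*j+1))*(gc^(2*j+1)) + (9/125)*gr*gc^2*(gr^(2*j+1))*(gc^(2*j+1))^2 + (-1/25)*gr*gc^2*(gr^(2*j+1))^2*(gc^(2*j+1)) + (-2/5)*gr*gc^3*(gc^(2*j+1))^2 + (121/375)*gr*gc^3*(gc^(2*j+1))^3 + (8/125)*gr*gc^3*(gr^(2*j+1))*(gc^(2*j+1))^2 + (23/125)*gr*gc^4*(gc^(2*j+1))^3 + (7/125)*gr*gc^4*(gr^(2*j+1))*(gc^(2*j+1))^2 + (17/375)*gr*gc^5*(gc^(2*j+1))^3 + (6/125)*gr*gc^5*(gr^(2*j+1))*(gc^(2*j+1))^2 + (-91/75)*gr^2*(gc^(2*j+1)) + (11/10)*gr^2*(gc^(2*j+1))^2 + (-78/125)*gr^2*(gc^(2*j+1))^3 + (4/5)*gr^2*(gr^(2*j+1))*(gc^(2*j+1)) + (-52/125)*gr^2*(gr^(2*j+1))*(gc^(2*j+1))^2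 + (1/25)*gr^2*(gr^(2*j+1))^2*(gc^(2*j+1)) + (-4/25)*gr^2*gc*(gc^(2*j+1)) + (1/2)*gr^2*gc*(gc^(2*j+1))^2 + (-68/125)*gr^2*gc*(gc^(2*j+1))^3 + (3/5)*gr^2*gc*(gr^(2*j+1))*(gc^(2*j+1)) + (-42/125)*gr^2*gc*(gr^(2*j+1))*(gc^(2*j+1))^2 + (-1/25)*gr^2*gc*(gr^(2*j+1))^2*(gc^(2*j+1)) + (-47/125)*gr^2*gc^2*(gc^(2*j+1))^3 + (2/5)*gr^2*gc^2*(gr^(2*j+1))*(gc^(2*j+1)) + (-33/125)*gr^2*gc^2*(gr^(2*j+1))*(gc^(2*j+1))^2 + (-2/25)*gr^2*gc^2*(gr^(2*j+1))^2*(gc^(2*j+1)) + (-2/15)*gr^2*gc^3*(gc^(2*j+1))^3 + (-1/5)*gr^2*gc^3*(gr^(2*j+1))*(gc^(2*j+1))^2 + (19/375)*gr^2*gc^4*(gc^(2*j+1))^3 + (-18/125)*gr^2*gc^4*(gr^(2*j+1))*(gc^(2*j+1))^2 + (12/125)*gr^2*gc^5*(gc^(2*j+1))^3 + (-12/125)*gr^2*gc^5*(gr^(2*j+1))*(gc^(2*j+1))^2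 + (4/25)*gr^3*(gc^(2*j+1)) + (-1/2)*gr^3*(gc^(2*j+1))^2 + (316/375)*gr^3*(gc^(2*j+1))^3 + (-1)*gr^3*(gr^(2*j+1))*(gc^(2*j+1)) + (136/125)*gr^3*(gr^(2*j+1))*(gc^(2*j+1))^2 + (17/125)*gr^3*(gr^(2*j+1))^2*(gc^(2*j+1)) + (112/375)*gr^3*gc*(gc^(2*j+1))^3 + (-2/5)*gr^3*gc*(gr^(2*j+1))*(gc^(2*j+1)) + (94/125)*gr^3*gc*(gr^(2*j+1))*(gc^(2*j+1))^2 + (12/125)*gr^3*gc*(gr^(2*j+1))^2*(gc^(2*j+1)) + (-29/375)*gr^3*gc^2*(gc^(2*j+1))^3 + (61/125)*gr^3*gc^2*(gr^(2*j+1))*(gc^(2*j+1))^2 + (2/125)*gr^3*gc^2*(gr^(2*j+1))^2*(gc^(2*j+1)) + (-79/375)*gr^3*gc^3*(gc^(2*j+1))^3 + (38/125)*gr^3*gc^3*(gr^(2*j+1))*(gc^(2*j+1))^2 + (-4/25)*gr^3*gc^4*(gc^(2*j+1))^3 + (4/25)*gr^3*gc^4*(gr^(2*j+1))*(gc^(2*j+1))^2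 + (-8/125)*gr^3*gc^5*(gc^(2*j+1))^3 + (8/125)*gr^3*gc^5*(gr^(2*j+1))*(gc^(2*j+1))^2 + (16/75)*gr^4*(gc^(2*j+1))^3 + (2/5)*gr^4*(gr^(2*j+1))*(gc^(2*j+1)) + (-209/125)*gr^4*(gr^(2*j+1))*(gc^(2*j+1))^2 + (-26/125)*gr^4*(gr^(2*j+1))^2*(gc^(2*j+1)) + (64/125)*gr^4*gc*(gc^(2*j+1))^3 + (-23/25)*gr^4*gc*(gr^(2*j+1))*(gc^(2*j+1))^2 + (-14/125)*gr^4*gc*(gr^(2*j+1))^2*(gc^(2*j+1)) + (163/375)*gr^4*gc^2*(gc^(2*j+1))^3 + (-54/125)*gr^4*gc^2*(gr^(2*j+1))*(gc^(2*j+1))^2 + (-12/125)*gr^4*gc^2*(gr^(2*j+1))^2*(gc^(2*j+1)) + (28/125)*gr^4*gc^3*(gc^(2*j+1))^3 + (-28/125)*gr^4*gc^3*(gr^(2*j+1))*(gc^(2*j+1))^2 + (8/125)*gr^4*gc^4*(gc^(2*j+1))^3 + (-8/125)*gr^4*gc^4*(gr^(2*j+1))*(gc^(2*j+1))^2 + (-463/375)*gr^5*(gc^(2*j+1))^3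 + (181/125)*gr^5*(gr^(2*j+1))*(gc^(2*j+1))^2 + (2/5)*gr^5*(gr^(2*j+1))^2*(gc^(2*j+1)) + (-271/375)*gr^5*gc*(gc^(2*j+1))^3 + (66/125)*gr^5*gc*(gr^(2*j+1))*(gc^(2*j+1))^2 + (36/125)*gr^5*gc*(gr^(2*j+1))^2*(gc^(2*j+1)) + (-36/125)*gr^5*gc^2*(gc^(2*j+1))^3 + (12/125)*gr^5*gc^2*(gr^(2*j+1))*(gc^(2*j+1))^2 + (24/125)*gr^5*gc^2*(gr^(2*j+1))^2*(gc^(2*j+1)) + (-8/125)*gr^5*gc^3*(gc^(2*j+1))^3 + (8/125)*gr^5*gc^3*(gr^(2*j+1))*(gc^(2*j+1))^2 + (403/375)*gr^6*(gc^(2*j+1))^3 + (-14/25)*gr^6*(gr^(2*j+1))*(gc^(2*j+1))^2 + (-76/125)*gr^6*(gr^(2*j+1))^2*(gc^(2*j+1)) + (44/125)*gr^6*gc*(gc^(2*j+1))^3 + (-4/125)*gr^6*gc*(gr^(2*j+1))*(gc^(2*j+1))^2 + (-8/25)*gr^6*gc*(gr^(2*j+1))^2*(gc^(2*j+1)) +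 (8/125)*gr^6*gc^2*(gc^(2*j+1))^3 + (8/125)*gr^6*gc^2*(gr^(2*j+1))*(gc^(2*j+1))^2 + (-16/125)*gr^6*gc^2*(gr^(2*j+1))^2*(gc^(2*j+1)) + (-52/125)*gr^7*(gc^(2*j+1))^3 + (-4/125)*gr^7*(gr^(2*j+1))*(gc^(2*j+1))^2 + (56/125)*gr^7*(gr^(2*j+1))^2*(gc^(2*j+1)) + (-8/125)*gr^7*gc*(gc^(2*j+1))^3 + (-8/125)*gr^7*gc*(gr^(2*j+1))*(gc^(2*j+1))^2 + (16/125)*gr^7*gc*(gr^(2*j+1))^2*(gc^(2*j+1)) + (8/125)*gr^8*(gc^(2*j+1))^3 + (8/125)*gr^8*(gr^(2*j+1))*(gc^(2*j+1))^2 + (-16/125)*gr^8*(gr^(2*j+1))^2*(gc^(2*j+1))) * hgc + ((-247/150)*(gc^(2*j+1)) + (9/10)*(gc^(2*j+1))^2 + (-88/375)*(gc^(2*j+1))^3 + (-89/150)*(gr^(2*j+1)) + (1)*(gr^(2*j+1))*(gc^(2*j+1)) + (-124/125)*(gr^(2*j+1))*(gc^(2*j+1))^2 + (3/10)*(gr^(2*j+1))^2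 + (-11/25)*(gr^(2*j+1))^2*(gc^(2*j+1)) + (-4/75)*(gr^(2*j+1))^3 + (91/75)*gr*(gc^(2*j+1)) + (-11/10)*gr*(gc^(2*j+1))^2 + (53/125)*gr*(gc^(2*j+1))^3 + (-67/75)*gr*(gr^(2*j+1)) + (-4/5)*gr*(gr^(2*j+1))*(gc^(2*j+1)) + (187/125)*gr*(gr^(2*j+1))*(gc^(2*j+1))^2 + (1/10)*gr*(gr^(2*j+1))^2 + (-1/25)*gr*(gr^(2*j+1))^3 + (-4/25)*gr^2*(gc^(2*j+1)) + (1/2)*gr^2*(gc^(2*j+1))^2 + (-16/375)*gr^2*(gc^(2*j+1))^3 + (-4/25)*gr^2*(gr^(2*j+1)) + (4/5)*gr^2*(gr^(2*j+1))*(gc^(2*j+1)) + (-248/125)*gr^2*(gr^(2*j+1))*(gc^(2*j+1))^2 + (1/2)*gr^2*(gr^(2*j+1))^2 + (-3/5)*gr^2*(gr^(2*j+1))^2*(gc^(2*j+1)) + (-1/75)*gr^2*(gr^(2*j+1))^3 + (-1)*gr^3*(gc^(2*j+1))^3 + (257/125)*gr^3*(gr^(2*j+1))*(gc^(2*j+1))^2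 + (63/125)*gr^3*(gr^(2*j+1))^2*(gc^(2*j+1)) + (-1/25)*gr^3*(gr^(2*j+1))^3 + (119/75)*gr^4*(gc^(2*j+1))^3 + (-37/25)*gr^4*(gr^(2*j+1))*(gc^(2*j+1))^2 + (-19/25)*gr^4*(gr^(2*j+1))^2*(gc^(2*j+1)) + (-8/75)*gr^4*(gr^(2*j+1))^3 + (-427/375)*gr^5*(gc^(2*j+1))^3 + (62/125)*gr^5*(gr^(2*j+1))*(gc^(2*j+1))^2 + (82/125)*gr^5*(gr^(2*j+1))^2*(gc^(2*j+1)) + (-1/75)*gr^5*(gr^(2*j+1))^3 + (52/125)*gr^6*(gc^(2*j+1))^3 + (4/125)*gr^6*(gr^(2*j+1))*(gc^(2*j+1))^2 + (-52/125)*gr^6*(gr^(2*j+1))^2*(gc^(2*j+1)) + (-4/125)*gr^6*(gr^(2*j+1))^3 + (-8/125)*gr^7*(gc^(2*j+1))^3 + (-8/125)*gr^7*(gr^(2*j+1))*(gc^(2*j+1))^2 + (8/125)*gr^7*(gr^(2*j+1))^2*(gc^(2*j+1)) + (8/125)*gr^7*(gr^(2*j+1))^3) * hf + ((1) + (-1)*(gc^(2*j+1))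 + (-2/5)*(gr^(2*j+1)) + (3/5)*gr*(gc^(2*j+1)) + (-3/5)*gr*(gr^(2*j+1))) * hxz
    have eo3 : S 3 (2*j+3) = ((67/50) + (-17/10)*(gc^(2*j+3)) + (179/100)*(gc^(2*j+3))^2 + (-4/5)*(gc^(2*j+3))^3 + (13/100)*(gc^(2*j+3))^4 + (-2/5)*(gr^(2*j+3)) + (73/100)*(gr^(2*j+3))^2 + (-3/10)*(gr^(2*j+3))^3 + (1/20)*(gr^(2*j+3))^4 + (13/10)*gr*(gc^(2*j+3)) + (-53/50)*gr*(gc^(2*j+3))^2 + (1/2)*gr*(gc^(2*j+3))^3 + (-2/25)*gr*(gc^(2*j+3))^4 + (-13/10)*gr*(gr^(2*j+3)) + (53/50)*gr*(gr^(2*j+3))^2 + (-1/2)*gr*(gr^(2*j+3))^3 + (2/25)*gr*(gr^(2*j+3))^4) := by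
      have hrec := recur_even (2*j+1) hodd 3
      rw [show 2*j+1+2 = 2*j+3 by omega, show 2*j+1+3 = 2*j+4 by omega,
        show 2*j+1+1 = 2*j+2 by omega] at hrec
      rw [hrec, expand3 (2*j+1), ih1o, ih2o, ih3o, ih3e, fibR' (2*j+4), fibR' (2*j+1)]
      have hxz := hxzo
      linear_combination ((9/10)*(gc^(2*j+1)) + (2/5)*(gc^(2*j+1))^2 + (-12/25)*(gc^(2*j+1))^3 + (71/625)*(gc^(2*j+1))^4 + (29/250)*(gr^(2*j+1))*(gc^(2*j+1)) + (-1/625)*(gr^(2*j+1))*(gc^(2*j+1))^3 + (-9/50)*(gr^(2*j+1))^2*(gc^(2*j+1)) + (3/250)*(gr^(2*j+1))^2*(gc^(2*j+1))^2 + (4/125)*(gr^(2*j+1))^3*(gc^(2*j+1)) + (17/10)*gc*(gc^(2*j+1)) + (2/5)*gc*(gc^(2*j+1))^2 + (-12/25)*gc*(gc^(2*j+1))^3 + (71/625)*gc*(gc^(2*j+1))^4 + (29/250)*gc*(gr^(2*j+1))*(gc^(2*j+1)) + (-1/625)*gc*(gr^(2*j+1))*(gc^(2*j+1))^3 + (-9/50)*gc*(gr^(2*j+1))^2*(gc^(2*j+1))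 + (3/250)*gc*(gr^(2*j+1))^2*(gc^(2*j+1))^2 + (4/125)*gc*(gr^(2*j+1))^3*(gc^(2*j+1)) + (-121/100)*gc^2*(gc^(2*j+1))^2 + (-12/25)*gc^2*(gc^(2*j+1))^3 + (71/625)*gc^2*(gc^(2*j+1))^4 + (29/250)*gc^2*(gr^(2*j+1))*(gc^(2*j+1)) + (-1/625)*gc^2*(gr^(2*j+1))*(gc^(2*j+1))^3 + (-9/50)*gc^2*(gr^(2*j+1))^2*(gc^(2*j+1)) + (3/250)*gc^2*(gr^(2*j+1))^2*(gc^(2*j+1))^2 + (4/125)*gc^2*(gr^(2*j+1))^3*(gc^(2*j+1)) + (-907/500)*gc^3*(gc^(2*j+1))^2 + (37/50)*gc^3*(gc^(2*j+1))^3 + (16/625)*gc^3*(gc^(2*j+1))^4 + (-1/625)*gc^3*(gr^(2*j+1))*(gc^(2*j+1))^3 + (3/250)*gc^3*(gr^(2*j+1))^2*(gc^(2*j+1))^2 + (-3/125)*gc^4*(gc^(2*j+1))^2 + (37/50)*gc^4*(gc^(2*j+1))^3 + (-261/2500)*gc^4*(gc^(2*j+1))^4 + (-1/625)*gc^4*(gr^(2*j+1))*(gc^(2*j+1))^3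 + (3/250)*gc^4*(gr^(2*j+1))^2*(gc^(2*j+1))^2 + (-3/125)*gc^5*(gc^(2*j+1))^2 + (37/50)*gc^5*(gc^(2*j+1))^3 + (-261/2500)*gc^5*(gc^(2*j+1))^4 + (-1/625)*gc^5*(gr^(2*j+1))*(gc^(2*j+1))^3 + (3/250)*gc^5*(gr^(2*j+1))^2*(gc^(2*j+1))^2 + (-321/2500)*gc^6*(gc^(2*j+1))^4 + (-1/625)*gc^6*(gr^(2*j+1))*(gc^(2*j+1))^3 + (-321/2500)*gc^7*(gc^(2*j+1))^4 + (-1/625)*gc^7*(gr^(2*j+1))*(gc^(2*j+1))^3 + (1/625)*gc^8*(gc^(2*j+1))^4 + (-1/625)*gc^8*(gr^(2*j+1))*(gc^(2*j+1))^3 + (-23/10)*gr*(gc^(2*j+1)) + (149/125)*gr*(gc^(2*j+1))^2 + (3/25)*gr*(gc^(2*j+1))^3 + (-177/1250)*gr*(gc^(2*j+1))^4 + (3/125)*gr*(gr^(2*j+1))*(gc^(2*j+1)) + (-3/50)*gr*(gr^(2*j+1))*(gc^(2*j+1))^2 + (16/625)*gr*(gr^(2*j+1))*(gc^(2*j+1))^3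 + (12/25)*gr*(gr^(2*j+1))^2*(gc^(2*j+1)) + (-12/125)*gr*(gr^(2*j+1))^2*(gc^(2*j+1))^2 + (-9/125)*gr*(gr^(2*j+1))^3*(gc^(2*j+1)) + (-13/10)*gr*gc*(gc^(2*j+1)) + (199/125)*gr*gc*(gc^(2*j+1))^2 + (-9/25)*gr*gc*(gc^(2*j+1))^3 + (-7/250)*gr*gc*(gc^(2*j+1))^4 + (7/50)*gr*gc*(gr^(2*j+1))*(gc^(2*j+1)) + (-3/50)*gr*gc*(gr^(2*j+1))*(gc^(2*j+1))^2 + (3/125)*gr*gc*(gr^(2*j+1))*(gc^(2*j+1))^3 + (3/10)*gr*gc*(gr^(2*j+1))^2*(gc^(2*j+1)) + (-21/250)*gr*gc*(gr^(2*j+1))^2*(gc^(2*j+1))^2 + (-1/25)*gr*gc*(gr^(2*j+1))^3*(gc^(2*j+1)) + (661/500)*gr*gc^2*(gc^(2*j+1))^2 + (-21/25)*gr*gc^2*(gc^(2*j+1))^3 + (107/1250)*gr*gc^2*(gc^(2*j+1))^4 + (32/125)*gr*gc^2*(gr^(2*j+1))*(gc^(2*j+1)) + (-3/50)*gr*gc^2*(gr^(2*j+1))*(gc^(2*j+1))^2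 + (14/625)*gr*gc^2*(gr^(2*j+1))*(gc^(2*j+1))^3 + (3/25)*gr*gc^2*(gr^(2*j+1))^2*(gc^(2*j+1)) + (-9/125)*gr*gc^2*(gr^(2*j+1))^2*(gc^(2*j+1))^2 + (-1/125)*gr*gc^2*(gr^(2*j+1))^3*(gc^(2*j+1)) + (301/250)*gr*gc^3*(gc^(2*j+1))^2 + (-42/25)*gr*gc^3*(gc^(2*j+1))^3 + (429/1250)*gr*gc^3*(gc^(2*j+1))^4 + (-3/50)*gr*gc^3*(gr^(2*j+1))*(gc^(2*j+1))^2 + (13/625)*gr*gc^3*(gr^(2*j+1))*(gc^(2*j+1))^3 + (-3/50)*gr*gc^3*(gr^(2*j+1))^2*(gc^(2*j+1))^2 + (3/25)*gr*gc^4*(gc^(2*j+1))^2 + (-47/50)*gr*gc^4*(gc^(2*j+1))^3 + (797/2500)*gr*gc^4*(gc^(2*j+1))^4 + (-3/50)*gr*gc^4*(gr^(2*j+1))*(gc^(2*j+1))^2 + (12/625)*gr*gc^4*(gr^(2*j+1))*(gc^(2*j+1))^3 + (-6/125)*gr*gc^4*(gr^(2*j+1))^2*(gc^(2*j+1))^2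 + (12/125)*gr*gc^5*(gc^(2*j+1))^2 + (-1/5)*gr*gc^5*(gc^(2*j+1))^3 + (134/625)*gr*gc^5*(gc^(2*j+1))^4 + (-3/50)*gr*gc^5*(gr^(2*j+1))*(gc^(2*j+1))^2 + (11/625)*gr*gc^5*(gr^(2*j+1))*(gc^(2*j+1))^3 + (-9/250)*gr*gc^5*(gr^(2*j+1))^2*(gc^(2*j+1))^2 + (97/500)*gr*gc^6*(gc^(2*j+1))^4 + (2/125)*gr*gc^6*(gr^(2*j+1))*(gc^(2*j+1))^3 + (41/625)*gr*gc^7*(gc^(2*j+1))^4 + (9/625)*gr*gc^7*(gr^(2*j+1))*(gc^(2*j+1))^3 + (-8/625)*gr*gc^8*(gc^(2*j+1))^4 + (8/625)*gr*gc^8*(gr^(2*j+1))*(gc^(2*j+1))^3 + (13/10)*gr^2*(gc^(2*j+1)) + (-1727/500)*gr^2*(gc^(2*j+1))^2 + (153/50)*gr^2*(gc^(2*j+1))^3 + (-554/625)*gr^2*(gc^(2*j+1))^4 + (-343/250)*gr^2*(gr^(2*j+1))*(gc^(2*j+1)) + (27/50)*gr^2*(gr^(2*j+1))*(gc^(2*j+1))^2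 + (-116/625)*gr^2*(gr^(2*j+1))*(gc^(2*j+1))^3 + (3/50)*gr^2*(gr^(2*j+1))^2*(gc^(2*j+1)) + (3/10)*gr^2*(gr^(2*j+1))^2*(gc^(2*j+1))^2 + (-8/125)*gr^2*(gr^(2*j+1))^3*(gc^(2*j+1)) + (-931/500)*gr^2*gc*(gc^(2*j+1))^2 + (27/10)*gr^2*gc*(gc^(2*j+1))^3 + (-1143/1250)*gr^2*gc*(gc^(2*j+1))^4 + (-154/125)*gr^2*gc*(gr^(2*j+1))*(gc^(2*j+1)) + (12/25)*gr^2*gc*(gr^(2*j+1))*(gc^(2*j+1))^2 + (-101/625)*gr^2*gc*(gr^(2*j+1))*(gc^(2*j+1))^3 + (9/25)*gr^2*gc*(gr^(2*j+1))^2*(gc^(2*j+1)) + (27/125)*gr^2*gc*(gr^(2*j+1))^2*(gc^(2*j+1))^2 + (-13/125)*gr^2*gc*(gr^(2*j+1))^3*(gc^(2*j+1)) + (-27/50)*gr^2*gc^2*(gc^(2*j+1))^2 + (93/50)*gr^2*gc^2*(gc^(2*j+1))^3 + (-518/625)*gr^2*gc^2*(gc^(2*j+1))^4 + (-122/125)*gr^2*gc^2*(gr^(2*j+1))*(gc^(2*j+1))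 + (21/50)*gr^2*gc^2*(gr^(2*j+1))*(gc^(2*j+1))^2 + (-87/625)*gr^2*gc^2*(gr^(2*j+1))*(gc^(2*j+1))^3 + (12/25)*gr^2*gc^2*(gr^(2*j+1))^2*(gc^(2*j+1)) + (18/125)*gr^2*gc^2*(gr^(2*j+1))^2*(gc^(2*j+1))^2 + (-14/125)*gr^2*gc^2*(gr^(2*j+1))^3*(gc^(2*j+1)) + (-39/125)*gr^2*gc^3*(gc^(2*j+1))^2 + (33/50)*gr^2*gc^3*(gc^(2*j+1))^3 + (-747/1250)*gr^2*gc^3*(gc^(2*j+1))^4 + (9/25)*gr^2*gc^3*(gr^(2*j+1))*(gc^(2*j+1))^2 + (-74/625)*gr^2*gc^3*(gr^(2*j+1))*(gc^(2*j+1))^3 + (21/250)*gr^2*gc^3*(gr^(2*j+1))^2*(gc^(2*j+1))^2 + (-24/125)*gr^2*gc^4*(gc^(2*j+1))^2 + (-7/25)*gr^2*gc^4*(gc^(2*j+1))^3 + (-697/2500)*gr^2*gc^4*(gc^(2*j+1))^4 + (3/10)*gr^2*gc^4*(gr^(2*j+1))*(gc^(2*j+1))^2 + (-62/625)*gr^2*gc^4*(gr^(2*j+1))*(gc^(2*j+1))^3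 + (9/250)*gr^2*gc^4*(gr^(2*j+1))^2*(gc^(2*j+1))^2 + (-12/125)*gr^2*gc^5*(gc^(2*j+1))^2 + (-12/25)*gr^2*gc^5*(gc^(2*j+1))^3 + (-161/2500)*gr^2*gc^5*(gc^(2*j+1))^4 + (6/25)*gr^2*gc^5*(gr^(2*j+1))*(gc^(2*j+1))^2 + (-51/625)*gr^2*gc^5*(gr^(2*j+1))*(gc^(2*j+1))^3 + (-9/625)*gr^2*gc^6*(gc^(2*j+1))^4 + (-41/625)*gr^2*gc^6*(gr^(2*j+1))*(gc^(2*j+1))^3 + (32/625)*gr^2*gc^7*(gc^(2*j+1))^4 + (-32/625)*gr^2*gc^7*(gr^(2*j+1))*(gc^(2*j+1))^3 + (24/625)*gr^2*gc^8*(gc^(2*j+1))^4 + (-24/625)*gr^2*gc^8*(gr^(2*j+1))*(gc^(2*j+1))^3 + (1501/500)*gr^3*(gc^(2*j+1))^2 + (-211/50)*gr^3*(gc^(2*j+1))^3 + (3137/1250)*gr^3*(gc^(2*j+1))^4 + (282/125)*gr^3*(gr^(2*j+1))*(gc^(2*j+1)) + (-48/25)*gr^3*(gr^(2*j+1))*(gc^(2*j+1))^2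 + (471/625)*gr^3*(gr^(2*j+1))*(gc^(2*j+1))^3 + (-21/25)*gr^3*(gr^(2*j+1))^2*(gc^(2*j+1)) + (-267/625)*gr^3*(gr^(2*j+1))^2*(gc^(2*j+1))^2 + (24/125)*gr^3*(gr^(2*j+1))^3*(gc^(2*j+1)) + (57/50)*gr^3*gc*(gc^(2*j+1))^2 + (-38/25)*gr^3*gc*(gc^(2*j+1))^3 + (997/625)*gr^3*gc*(gc^(2*j+1))^4 + (128/125)*gr^3*gc*(gr^(2*j+1))*(gc^(2*j+1)) + (-36/25)*gr^3*gc*(gr^(2*j+1))*(gc^(2*j+1))^2 + (74/125)*gr^3*gc*(gr^(2*j+1))*(gc^(2*j+1))^3 + (-12/25)*gr^3*gc*(gr^(2*j+1))^2*(gc^(2*j+1)) + (-132/625)*gr^3*gc*(gr^(2*j+1))^2*(gc^(2*j+1))^2 + (11/125)*gr^3*gc*(gr^(2*j+1))^3*(gc^(2*j+1)) + (3/5)*gr^3*gc^2*(gc^(2*j+1))^2 + (17/50)*gr^3*gc^2*(gc^(2*j+1))^3 + (479/625)*gr^3*gc^2*(gc^(2*j+1))^4 + (6/125)*gr^3*gc^2*(gr^(2*j+1))*(gc^(2*j+1))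 + (-51/50)*gr^3*gc^2*(gr^(2*j+1))*(gc^(2*j+1))^2 + (283/625)*gr^3*gc^2*(gr^(2*j+1))*(gc^(2*j+1))^3 + (-42/625)*gr^3*gc^2*(gr^(2*j+1))^2*(gc^(2*j+1))^2 + (-3/125)*gr^3*gc^2*(gr^(2*j+1))^3*(gc^(2*j+1)) + (36/125)*gr^3*gc^3*(gc^(2*j+1))^2 + (1)*gr^3*gc^3*(gc^(2*j+1))^3 + (211/1250)*gr^3*gc^3*(gc^(2*j+1))^4 + (-39/50)*gr^3*gc^3*(gr^(2*j+1))*(gc^(2*j+1))^2 + (239/625)*gr^3*gc^3*(gr^(2*j+1))*(gc^(2*j+1))^3 + (21/1250)*gr^3*gc^3*(gr^(2*j+1))^2*(gc^(2*j+1))^2 + (12/125)*gr^3*gc^4*(gc^(2*j+1))^2 + (18/25)*gr^3*gc^4*(gc^(2*j+1))^3 + (-11/100)*gr^3*gc^4*(gc^(2*j+1))^4 + (-12/25)*gr^3*gc^4*(gr^(2*j+1))*(gc^(2*j+1))^2 + (177/625)*gr^3*gc^4*(gr^(2*j+1))*(gc^(2*j+1))^3 + (33/625)*gr^3*gc^4*(gr^(2*j+1))^2*(gc^(2*j+1))^2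 + (6/25)*gr^3*gc^5*(gc^(2*j+1))^3 + (-109/625)*gr^3*gc^5*(gc^(2*j+1))^4 + (-6/25)*gr^3*gc^5*(gr^(2*j+1))*(gc^(2*j+1))^2 + (126/625)*gr^3*gc^5*(gr^(2*j+1))*(gc^(2*j+1))^3 + (33/625)*gr^3*gc^5*(gr^(2*j+1))^2*(gc^(2*j+1))^2 + (-88/625)*gr^3*gc^6*(gc^(2*j+1))^4 + (88/625)*gr^3*gc^6*(gr^(2*j+1))*(gc^(2*j+1))^3 + (-56/625)*gr^3*gc^7*(gc^(2*j+1))^4 + (56/625)*gr^3*gc^7*(gr^(2*j+1))*(gc^(2*j+1))^3 + (-32/625)*gr^3*gc^8*(gc^(2*j+1))^4 + (32/625)*gr^3*gc^8*(gr^(2*j+1))*(gc^(2*j+1))^3 + (-531/250)*gr^4*(gc^(2*j+1))^2 + (-39/50)*gr^4*(gc^(2*j+1))^3 + (-4847/2500)*gr^4*(gc^(2*j+1))^4 + (-158/125)*gr^4*(gr^(2*j+1))*(gc^(2*j+1)) + (84/25)*gr^4*(gr^(2*j+1))*(gc^(2*j+1))^2 + (-1228/625)*gr^4*(gr^(2*j+1))*(gc^(2*j+1))^3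 + (3/5)*gr^4*(gr^(2*j+1))^2*(gc^(2*j+1)) + (147/1250)*gr^4*(gr^(2*j+1))^2*(gc^(2*j+1))^2 + (1/125)*gr^4*(gr^(2*j+1))^3*(gc^(2*j+1)) + (-123/125)*gr^4*gc*(gc^(2*j+1))^2 + (-23/10)*gr^4*gc*(gc^(2*j+1))^3 + (-859/2500)*gr^4*gc*(gc^(2*j+1))^4 + (-6/25)*gr^4*gc*(gr^(2*j+1))*(gc^(2*j+1)) + (48/25)*gr^4*gc*(gr^(2*j+1))*(gc^(2*j+1))^2 + (-858/625)*gr^4*gc*(gr^(2*j+1))*(gc^(2*j+1))^3 + (3/25)*gr^4*gc*(gr^(2*j+1))^2*(gc^(2*j+1)) + (-117/1250)*gr^4*gc*(gr^(2*j+1))^2*(gc^(2*j+1))^2 + (12/125)*gr^4*gc*(gr^(2*j+1))^3*(gc^(2*j+1)) + (-48/125)*gr^4*gc^2*(gc^(2*j+1))^2 + (-49/25)*gr^4*gc^2*(gc^(2*j+1))^3 + (1057/2500)*gr^4*gc^2*(gc^(2*j+1))^4 + (-24/125)*gr^4*gc^2*(gr^(2*j+1))*(gc^(2*j+1)) + (9/10)*gr^4*gc^2*(gr^(2*j+1))*(gc^(2*j+1))^2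 + (-23/25)*gr^4*gc^2*(gr^(2*j+1))*(gc^(2*j+1))^3 + (3/25)*gr^4*gc^2*(gr^(2*j+1))^2*(gc^(2*j+1)) + (-201/1250)*gr^4*gc^2*(gr^(2*j+1))^2*(gc^(2*j+1))^2 + (9/125)*gr^4*gc^2*(gr^(2*j+1))^3*(gc^(2*j+1)) + (-12/125)*gr^4*gc^3*(gc^(2*j+1))^2 + (-24/25)*gr^4*gc^3*(gc^(2*j+1))^3 + (1479/2500)*gr^4*gc^3*(gc^(2*j+1))^4 + (18/25)*gr^4*gc^3*(gr^(2*j+1))*(gc^(2*j+1))^2 + (-471/625)*gr^4*gc^3*(gr^(2*j+1))*(gc^(2*j+1))^3 + (-18/125)*gr^4*gc^3*(gr^(2*j+1))^2*(gc^(2*j+1))^2 + (-6/25)*gr^4*gc^4*(gc^(2*j+1))^3 + (301/625)*gr^4*gc^4*(gc^(2*j+1))^4 + (6/25)*gr^4*gc^4*(gr^(2*j+1))*(gc^(2*j+1))^2 + (-294/625)*gr^4*gc^4*(gr^(2*j+1))*(gc^(2*j+1))^3 + (-57/625)*gr^4*gc^4*(gr^(2*j+1))^2*(gc^(2*j+1))^2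 + (192/625)*gr^4*gc^5*(gc^(2*j+1))^4 + (-168/625)*gr^4*gc^5*(gr^(2*j+1))*(gc^(2*j+1))^3 + (-24/625)*gr^4*gc^5*(gr^(2*j+1))^2*(gc^(2*j+1))^2 + (104/625)*gr^4*gc^6*(gc^(2*j+1))^4 + (-104/625)*gr^4*gc^6*(gr^(2*j+1))*(gc^(2*j+1))^3 + (48/625)*gr^4*gc^7*(gc^(2*j+1))^4 + (-48/625)*gr^4*gc^7*(gr^(2*j+1))*(gc^(2*j+1))^3 + (16/625)*gr^4*gc^8*(gc^(2*j+1))^4 + (-16/625)*gr^4*gc^8*(gr^(2*j+1))*(gc^(2*j+1))^3 + (183/125)*gr^5*(gc^(2*j+1))^2 + (273/50)*gr^5*(gc^(2*j+1))^3 + (-4321/2500)*gr^5*(gc^(2*j+1))^4 + (78/125)*gr^5*(gr^(2*j+1))*(gc^(2*j+1)) + (-141/50)*gr^5*(gr^(2*j+1))*(gc^(2*j+1))^2 + (2282/625)*gr^5*(gr^(2*j+1))*(gc^(2*j+1))^3 + (-18/25)*gr^5*(gr^(2*j+1))^2*(gc^(2*j+1)) + (402/625)*gr^5*(gr^(2*j+1))^2*(gc^(2*j+1))^2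 + (-21/125)*gr^5*(gr^(2*j+1))^3*(gc^(2*j+1)) + (12/25)*gr^5*gc*(gc^(2*j+1))^2 + (79/25)*gr^5*gc*(gc^(2*j+1))^3 + (-259/125)*gr^5*gc*(gc^(2*j+1))^4 + (48/125)*gr^5*gc*(gr^(2*j+1))*(gc^(2*j+1)) + (-9/10)*gr^5*gc*(gr^(2*j+1))*(gc^(2*j+1))^2 + (1424/625)*gr^5*gc*(gr^(2*j+1))*(gc^(2*j+1))^3 + (-3/5)*gr^5*gc*(gr^(2*j+1))^2*(gc^(2*j+1)) + (687/1250)*gr^5*gc*(gr^(2*j+1))^2*(gc^(2*j+1))^2 + (-9/125)*gr^5*gc*(gr^(2*j+1))^3*(gc^(2*j+1)) + (12/125)*gr^5*gc^2*(gc^(2*j+1))^2 + (6/5)*gr^5*gc^2*(gc^(2*j+1))^3 + (-4123/2500)*gr^5*gc^2*(gc^(2*j+1))^4 + (24/125)*gr^5*gc^2*(gr^(2*j+1))*(gc^(2*j+1)) + (849/625)*gr^5*gc^2*(gr^(2*j+1))*(gc^(2*j+1))^3 + (-12/25)*gr^5*gc^2*(gr^(2*j+1))^2*(gc^(2*j+1))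 + (243/625)*gr^5*gc^2*(gr^(2*j+1))^2*(gc^(2*j+1))^2 + (6/25)*gr^5*gc^3*(gc^(2*j+1))^3 + (-661/625)*gr^5*gc^3*(gc^(2*j+1))^4 + (-6/25)*gr^5*gc^3*(gr^(2*j+1))*(gc^(2*j+1))^2 + (558/625)*gr^5*gc^3*(gr^(2*j+1))*(gc^(2*j+1))^3 + (153/625)*gr^5*gc^3*(gr^(2*j+1))^2*(gc^(2*j+1))^2 + (-72/125)*gr^5*gc^4*(gc^(2*j+1))^4 + (264/625)*gr^5*gc^4*(gr^(2*j+1))*(gc^(2*j+1))^3 + (96/625)*gr^5*gc^4*(gr^(2*j+1))^2*(gc^(2*j+1))^2 + (-168/625)*gr^5*gc^5*(gc^(2*j+1))^4 + (96/625)*gr^5*gc^5*(gr^(2*j+1))*(gc^(2*j+1))^3 + (72/625)*gr^5*gc^5*(gr^(2*j+1))^2*(gc^(2*j+1))^2 + (-64/625)*gr^5*gc^6*(gc^(2*j+1))^4 + (64/625)*gr^5*gc^6*(gr^(2*j+1))*(gc^(2*j+1))^3 + (-16/625)*gr^5*gc^7*(gc^(2*j+1))^4 + (16/625)*gr^5*gc^7*(gr^(2*j+1))*(gc^(2*j+1))^3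 + (-72/125)*gr^6*(gc^(2*j+1))^2 + (-23/5)*gr^6*(gc^(2*j+1))^3 + (14379/2500)*gr^6*(gc^(2*j+1))^4 + (-72/125)*gr^6*(gr^(2*j+1))*(gc^(2*j+1)) + (33/50)*gr^6*(gr^(2*j+1))*(gc^(2*j+1))^2 + (-623/125)*gr^6*(gr^(2*j+1))*(gc^(2*j+1))^3 + (39/25)*gr^6*(gr^(2*j+1))^2*(gc^(2*j+1)) + (-2001/1250)*gr^6*(gr^(2*j+1))^2*(gc^(2*j+1))^2 + (-18/625)*gr^6*(gr^(2*j+1))^3*(gc^(2*j+1)) + (-12/125)*gr^6*gc*(gc^(2*j+1))^2 + (-36/25)*gr^6*gc*(gc^(2*j+1))^3 + (9199/2500)*gr^6*gc*(gc^(2*j+1))^4 + (-24/125)*gr^6*gc*(gr^(2*j+1))*(gc^(2*j+1)) + (-6/25)*gr^6*gc*(gr^(2*j+1))*(gc^(2*j+1))^2 + (-1691/625)*gr^6*gc*(gr^(2*j+1))*(gc^(2*j+1))^3 + (24/25)*gr^6*gc*(gr^(2*j+1))^2*(gc^(2*j+1)) + (-657/625)*gr^6*gc*(gr^(2*j+1))^2*(gc^(2*j+1))^2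 + (-63/625)*gr^6*gc*(gr^(2*j+1))^3*(gc^(2*j+1)) + (-6/25)*gr^6*gc^2*(gc^(2*j+1))^3 + (1269/625)*gr^6*gc^2*(gc^(2*j+1))^4 + (-6/25)*gr^6*gc^2*(gr^(2*j+1))*(gc^(2*j+1))^2 + (-842/625)*gr^6*gc^2*(gr^(2*j+1))*(gc^(2*j+1))^3 + (12/25)*gr^6*gc^2*(gr^(2*j+1))^2*(gc^(2*j+1)) + (-414/625)*gr^6*gc^2*(gr^(2*j+1))^2*(gc^(2*j+1))^2 + (-63/625)*gr^6*gc^2*(gr^(2*j+1))^3*(gc^(2*j+1)) + (608/625)*gr^6*gc^3*(gc^(2*j+1))^4 + (-344/625)*gr^6*gc^3*(gr^(2*j+1))*(gc^(2*j+1))^3 + (-264/625)*gr^6*gc^3*(gr^(2*j+1))^2*(gc^(2*j+1))^2 + (248/625)*gr^6*gc^4*(gc^(2*j+1))^4 + (-16/125)*gr^6*gc^4*(gr^(2*j+1))*(gc^(2*j+1))^3 + (-168/625)*gr^6*gc^4*(gr^(2*j+1))^2*(gc^(2*j+1))^2 + (16/125)*gr^6*gc^5*(gc^(2*j+1))^4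 + (16/625)*gr^6*gc^5*(gr^(2*j+1))*(gc^(2*j+1))^3 + (-96/625)*gr^6*gc^5*(gr^(2*j+1))^2*(gc^(2*j+1))^2 + (16/625)*gr^6*gc^6*(gc^(2*j+1))^4 + (-16/625)*gr^6*gc^6*(gr^(2*j+1))*(gc^(2*j+1))^3 + (12/125)*gr^7*(gc^(2*j+1))^2 + (42/25)*gr^7*(gc^(2*j+1))^3 + (-18083/2500)*gr^7*(gc^(2*j+1))^4 + (24/125)*gr^7*(gr^(2*j+1))*(gc^(2*j+1)) + (12/25)*gr^7*(gr^(2*j+1))*(gc^(2*j+1))^2 + (2909/625)*gr^7*(gr^(2*j+1))*(gc^(2*j+1))^3 + (-36/25)*gr^7*(gr^(2*j+1))^2*(gc^(2*j+1)) + (1623/625)*gr^7*(gr^(2*j+1))^2*(gc^(2*j+1))^2 + (6/25)*gr^7*(gr^(2*j+1))^3*(gc^(2*j+1)) + (6/25)*gr^7*gc*(gc^(2*j+1))^3 + (-2221/625)*gr^7*gc*(gc^(2*j+1))^4 + (6/25)*gr^7*gc*(gr^(2*j+1))*(gc^(2*j+1))^2 + (1218/625)*gr^7*gc*(gr^(2*j+1))*(gc^(2*j+1))^3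 + (-12/25)*gr^7*gc*(gr^(2*j+1))^2*(gc^(2*j+1)) + (966/625)*gr^7*gc*(gr^(2*j+1))^2*(gc^(2*j+1))^2 + (87/625)*gr^7*gc*(gr^(2*j+1))^3*(gc^(2*j+1)) + (-952/625)*gr^7*gc^2*(gc^(2*j+1))^4 + (376/625)*gr^7*gc^2*(gr^(2*j+1))*(gc^(2*j+1))^3 + (552/625)*gr^7*gc^2*(gr^(2*j+1))^2*(gc^(2*j+1))^2 + (24/625)*gr^7*gc^2*(gr^(2*j+1))^3*(gc^(2*j+1)) + (-344/625)*gr^7*gc^3*(gc^(2*j+1))^4 + (32/625)*gr^7*gc^3*(gr^(2*j+1))*(gc^(2*j+1))^3 + (312/625)*gr^7*gc^3*(gr^(2*j+1))^2*(gc^(2*j+1))^2 + (-96/625)*gr^7*gc^4*(gc^(2*j+1))^4 + (-48/625)*gr^7*gc^4*(gr^(2*j+1))*(gc^(2*j+1))^3 + (144/625)*gr^7*gc^4*(gr^(2*j+1))^2*(gc^(2*j+1))^2 + (-16/625)*gr^7*gc^5*(gc^(2*j+1))^4 + (-32/625)*gr^7*gc^5*(gr^(2*j+1))*(gc^(2*j+1))^3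 + (48/625)*gr^7*gc^5*(gr^(2*j+1))^2*(gc^(2*j+1))^2 + (-6/25)*gr^8*(gc^(2*j+1))^3 + (3629/625)*gr^8*(gc^(2*j+1))^4 + (-6/25)*gr^8*(gr^(2*j+1))*(gc^(2*j+1))^2 + (-1546/625)*gr^8*(gr^(2*j+1))*(gc^(2*j+1))^3 + (12/25)*gr^8*(gr^(2*j+1))^2*(gc^(2*j+1)) + (-78/25)*gr^8*(gr^(2*j+1))^2*(gc^(2*j+1))^2 + (-183/625)*gr^8*(gr^(2*j+1))^3*(gc^(2*j+1)) + (1408/625)*gr^8*gc*(gc^(2*j+1))^4 + (-328/625)*gr^8*gc*(gr^(2*j+1))*(gc^(2*j+1))^3 + (-984/625)*gr^8*gc*(gr^(2*j+1))^2*(gc^(2*j+1))^2 + (-96/625)*gr^8*gc*(gr^(2*j+1))^3*(gc^(2*j+1)) + (456/625)*gr^8*gc^2*(gc^(2*j+1))^4 + (48/625)*gr^8*gc^2*(gr^(2*j+1))*(gc^(2*j+1))^3 + (-432/625)*gr^8*gc^2*(gr^(2*j+1))^2*(gc^(2*j+1))^2 + (-72/625)*gr^8*gc^2*(gr^(2*j+1))^3*(gc^(2*j+1))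 + (112/625)*gr^8*gc^3*(gc^(2*j+1))^4 + (16/125)*gr^8*gc^3*(gr^(2*j+1))*(gc^(2*j+1))^3 + (-192/625)*gr^8*gc^3*(gr^(2*j+1))^2*(gc^(2*j+1))^2 + (16/625)*gr^8*gc^4*(gc^(2*j+1))^4 + (32/625)*gr^8*gc^4*(gr^(2*j+1))*(gc^(2*j+1))^3 + (-48/625)*gr^8*gc^4*(gr^(2*j+1))^2*(gc^(2*j+1))^2 + (-1992/625)*gr^9*(gc^(2*j+1))^4 + (168/625)*gr^9*(gr^(2*j+1))*(gc^(2*j+1))^3 + (312/125)*gr^9*(gr^(2*j+1))^2*(gc^(2*j+1))^2 + (264/625)*gr^9*(gr^(2*j+1))^3*(gc^(2*j+1)) + (-584/625)*gr^9*gc*(gc^(2*j+1))^4 + (-32/125)*gr^9*gc*(gr^(2*j+1))*(gc^(2*j+1))^3 + (576/625)*gr^9*gc*(gr^(2*j+1))^2*(gc^(2*j+1))^2 + (168/625)*gr^9*gc*(gr^(2*j+1))^3*(gc^(2*j+1)) + (-128/625)*gr^9*gc^2*(gc^(2*j+1))^4 + (-112/625)*gr^9*gc^2*(gr^(2*j+1))*(gc^(2*j+1))^3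 + (144/625)*gr^9*gc^2*(gr^(2*j+1))^2*(gc^(2*j+1))^2 + (96/625)*gr^9*gc^2*(gr^(2*j+1))^3*(gc^(2*j+1)) + (-16/625)*gr^9*gc^3*(gc^(2*j+1))^4 + (-32/625)*gr^9*gc^3*(gr^(2*j+1))*(gc^(2*j+1))^3 + (48/625)*gr^9*gc^3*(gr^(2*j+1))^2*(gc^(2*j+1))^2 + (728/625)*gr^10*(gc^(2*j+1))^4 + (304/625)*gr^10*(gr^(2*j+1))*(gc^(2*j+1))^3 + (-144/125)*gr^10*(gr^(2*j+1))^2*(gc^(2*j+1))^2 + (-312/625)*gr^10*(gr^(2*j+1))^3*(gc^(2*j+1)) + (144/625)*gr^10*gc*(gc^(2*j+1))^4 + (144/625)*gr^10*gc*(gr^(2*j+1))*(gc^(2*j+1))^3 + (-144/625)*gr^10*gc*(gr^(2*j+1))^2*(gc^(2*j+1))^2 + (-144/625)*gr^10*gc*(gr^(2*j+1))^3*(gc^(2*j+1)) + (16/625)*gr^10*gc^2*(gc^(2*j+1))^4 + (32/625)*gr^10*gc^2*(gr^(2*j+1))*(gc^(2*j+1))^3 + (-48/625)*gr^10*gc^2*(gr^(2*j+1))^3*(gc^(2*j+1))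 + (-32/125)*gr^11*(gc^(2*j+1))^4 + (-176/625)*gr^11*(gr^(2*j+1))*(gc^(2*j+1))^3 + (144/625)*gr^11*(gr^(2*j+1))^2*(gc^(2*j+1))^2 + (192/625)*gr^11*(gr^(2*j+1))^3*(gc^(2*j+1)) + (-16/625)*gr^11*gc*(gc^(2*j+1))^4 + (-32/625)*gr^11*gc*(gr^(2*j+1))*(gc^(2*j+1))^3 + (48/625)*gr^11*gc*(gr^(2*j+1))^3*(gc^(2*j+1)) + (16/625)*gr^12*(gc^(2*j+1))^4 + (32/625)*gr^12*(gr^(2*j+1))*(gc^(2*j+1))^3 + (-48/625)*gr^12*(gr^(2*j+1))^3*(gc^(2*j+1))) * hgc + ((23/10)*(gc^(2*j+1)) + (-15/4)*(gc^(2*j+1))^2 + (32/25)*(gc^(2*j+1))^3 + (-609/2500)*(gc^(2*j+1))^4 + (1)*(gr^(2*j+1)) + (-409/250)*(gr^(2*j+1))*(gc^(2*j+1)) + (3/2)*(gr^(2*j+1))*(gc^(2*j+1))^2 + (-974/625)*(gr^(2*j+1))*(gc^(2*j+1))^3 + (-133/100)*(gr^(2*j+1))^2 + (39/50)*(gr^(2*j+1))^2*(gc^(2*j+1))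 + (-9/125)*(gr^(2*j+1))^2*(gc^(2*j+1))^2 + (3/10)*(gr^(2*j+1))^3 + (-79/125)*(gr^(2*j+1))^3*(gc^(2*j+1)) + (-1/20)*(gr^(2*j+1))^4 + (-13/10)*gr*(gc^(2*j+1)) + (2489/500)*gr*(gc^(2*j+1))^2 + (-119/50)*gr*(gc^(2*j+1))^3 + (1447/2500)*gr*(gc^(2*j+1))^4 + (13/10)*gr*(gr^(2*j+1)) + (216/125)*gr*(gr^(2*j+1))*(gc^(2*j+1)) + (-117/50)*gr*(gr^(2*j+1))*(gc^(2*j+1))^2 + (1557/625)*gr*(gr^(2*j+1))*(gc^(2*j+1))^3 + (-69/100)*gr*(gr^(2*j+1))^2 + (-27/50)*gr*(gr^(2*j+1))^2*(gc^(2*j+1)) + (9/50)*gr*(gr^(2*j+1))^2*(gc^(2*j+1))^2 + (1/5)*gr*(gr^(2*j+1))^3 + (-28/125)*gr*(gr^(2*j+1))^3*(gc^(2*j+1)) + (-3/100)*gr*(gr^(2*j+1))^4 + (-2041/500)*gr^2*(gc^(2*j+1))^2 + (18/25)*gr^2*(gc^(2*j+1))^3 + (-97/1250)*gr^2*(gc^(2*j+1))^4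 + (-246/125)*gr^2*(gr^(2*j+1))*(gc^(2*j+1)) + (81/25)*gr^2*(gr^(2*j+1))*(gc^(2*j+1))^2 + (-2399/625)*gr^2*(gr^(2*j+1))*(gc^(2*j+1))^3 + (-131/100)*gr^2*(gr^(2*j+1))^2 + (87/50)*gr^2*(gr^(2*j+1))^2*(gc^(2*j+1)) + (-81/125)*gr^2*(gr^(2*j+1))^2*(gc^(2*j+1))^2 + (1/10)*gr^2*(gr^(2*j+1))^3 + (-52/125)*gr^2*(gr^(2*j+1))^3*(gc^(2*j+1)) + (-1/50)*gr^2*(gr^(2*j+1))^4 + (651/250)*gr^3*(gc^(2*j+1))^2 + (209/50)*gr^3*(gc^(2*j+1))^3 + (-6849/2500)*gr^3*(gc^(2*j+1))^4 + (84/125)*gr^3*(gr^(2*j+1))*(gc^(2*j+1)) + (-177/50)*gr^3*(gr^(2*j+1))*(gc^(2*j+1))^2 + (3424/625)*gr^3*(gr^(2*j+1))*(gc^(2*j+1))^3 + (-51/250)*gr^3*(gr^(2*j+1))^2 + (-69/50)*gr^3*(gr^(2*j+1))^2*(gc^(2*j+1)) + (972/625)*gr^3*(gr^(2*j+1))^2*(gc^(2*j+1))^2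 + (11/50)*gr^3*(gr^(2*j+1))^3 + (-8/125)*gr^3*(gr^(2*j+1))^3*(gc^(2*j+1)) + (11/500)*gr^3*(gr^(2*j+1))^4 + (-39/25)*gr^4*(gc^(2*j+1))^2 + (-69/10)*gr^4*(gc^(2*j+1))^3 + (4444/625)*gr^4*(gc^(2*j+1))^4 + (-102/125)*gr^4*(gr^(2*j+1))*(gc^(2*j+1)) + (129/50)*gr^4*(gr^(2*j+1))*(gc^(2*j+1))^2 + (-4269/625)*gr^4*(gr^(2*j+1))*(gc^(2*j+1))^3 + (-3/25)*gr^4*(gr^(2*j+1))^2 + (42/25)*gr^4*(gr^(2*j+1))^2*(gc^(2*j+1)) + (-687/250)*gr^4*(gr^(2*j+1))^2*(gc^(2*j+1))^2 + (1/2)*gr^4*(gr^(2*j+1))^3 + (-21/125)*gr^4*(gr^(2*j+1))^3*(gc^(2*j+1)) + (-1/10)*gr^4*(gr^(2*j+1))^4 + (72/125)*gr^5*(gc^(2*j+1))^2 + (121/25)*gr^5*(gc^(2*j+1))^3 + (-25151/2500)*gr^5*(gc^(2*j+1))^4 + (72/125)*gr^5*(gr^(2*j+1))*(gc^(2*j+1))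 + (-21/50)*gr^5*(gr^(2*j+1))*(gc^(2*j+1))^2 + (4253/625)*gr^5*(gr^(2*j+1))*(gc^(2*j+1))^3 + (-87/50)*gr^5*(gr^(2*j+1))^2*(gc^(2*j+1)) + (2361/625)*gr^5*(gr^(2*j+1))^2*(gc^(2*j+1))^2 + (1/5)*gr^5*(gr^(2*j+1))^3 + (7/25)*gr^5*(gr^(2*j+1))^3*(gc^(2*j+1)) + (-7/100)*gr^5*(gr^(2*j+1))^4 + (-12/125)*gr^6*(gc^(2*j+1))^2 + (-42/25)*gr^6*(gc^(2*j+1))^3 + (24227/2500)*gr^6*(gc^(2*j+1))^4 + (-24/125)*gr^6*(gr^(2*j+1))*(gc^(2*j+1)) + (-12/25)*gr^6*(gr^(2*j+1))*(gc^(2*j+1))^2 + (-5)*gr^6*(gr^(2*j+1))*(gc^(2*j+1))^3 + (-12/125)*gr^6*(gr^(2*j+1))^2 + (6/5)*gr^6*(gr^(2*j+1))^2*(gc^(2*j+1)) + (-2691/625)*gr^6*(gr^(2*j+1))^2*(gc^(2*j+1))^2 + (-367/625)*gr^6*(gr^(2*j+1))^3*(gc^(2*j+1)) + (-21/500)*gr^6*(gr^(2*j+1))^4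 + (6/25)*gr^7*(gc^(2*j+1))^3 + (-4229/625)*gr^7*(gc^(2*j+1))^4 + (6/25)*gr^7*(gr^(2*j+1))*(gc^(2*j+1))^2 + (1354/625)*gr^7*(gr^(2*j+1))*(gc^(2*j+1))^3 + (-6/25)*gr^7*(gr^(2*j+1))^2*(gc^(2*j+1)) + (2496/625)*gr^7*(gr^(2*j+1))^2*(gc^(2*j+1))^2 + (-6/25)*gr^7*(gr^(2*j+1))^3 + (374/625)*gr^7*(gr^(2*j+1))^3*(gc^(2*j+1)) + (1/125)*gr^7*(gr^(2*j+1))^4 + (2136/625)*gr^8*(gc^(2*j+1))^4 + (-24/625)*gr^8*(gr^(2*j+1))*(gc^(2*j+1))^3 + (-1704/625)*gr^8*(gr^(2*j+1))^2*(gc^(2*j+1))^2 + (-408/625)*gr^8*(gr^(2*j+1))^3*(gc^(2*j+1)) + (-744/625)*gr^9*(gc^(2*j+1))^4 + (-336/625)*gr^9*(gr^(2*j+1))*(gc^(2*j+1))^3 + (144/125)*gr^9*(gr^(2*j+1))^2*(gc^(2*j+1))^2 + (336/625)*gr^9*(gr^(2*j+1))^3*(gc^(2*j+1)) + (24/625)*gr^9*(gr^(2*j+1))^4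 + (32/125)*gr^10*(gc^(2*j+1))^4 + (176/625)*gr^10*(gr^(2*j+1))*(gc^(2*j+1))^3 + (-144/625)*gr^10*(gr^(2*j+1))^2*(gc^(2*j+1))^2 + (-176/625)*gr^10*(gr^(2*j+1))^3*(gc^(2*j+1)) + (-16/625)*gr^10*(gr^(2*j+1))^4 + (-16/625)*gr^11*(gc^(2*j+1))^4 + (-32/625)*gr^11*(gr^(2*j+1))*(gc^(2*j+1))^3 + (32/625)*gr^11*(gr^(2*j+1))^3*(gc^(2*j+1)) + (16/625)*gr^11*(gr^(2*j+1))^4) * hf + ((-73/50) + (3/2)*(gc^(2*j+1)) + (-39/25)*(gc^(2*j+1))^2 + (3/5)*(gr^(2*j+1)) + (-3/50)*(gr^(2*j+1))*(gc^(2*j+1)) + (-3/5)*(gr^(2*j+1))^2 + (-9/10)*gr*(gc^(2*j+1)) + (24/25)*gr*(gc^(2*j+1))^2 + (9/10)*gr*(gr^(2*j+1)) + (-24/25)*gr*(gr^(2*j+1))^2) * hxz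
    have ee1 : S 1 (2*j+4) = ((1/5) + (-1/2)*(gc^(2*j+4)) + (1/5)*(gc^(2*j+4))^2 + (1/10)*(gr^(2*j+4))^2 + (1/2)*gr*(gc^(2*j+4)) + (-1/10)*gr*(gc^(2*j+4))^2 + (-1/2)*gr*(gr^(2*j+4)) + (1/10)*gr*(gr^(2*j+4))^2) := by
      have hrec := recur_odd (2*j+2) heven 1
      rw [show 2*j+2+2 = 2*j+4 by omega, show 2*j+2+3 = 2*j+5 by omega,
        show 2*j+2+1 = 2*j+3 by omega] at hrec
      rw [hrec, expand1 (2*j+2), ih1e, eo1, fibR' (2*j+5), fibR' (2*j+2)]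
      have hxz := hxze
      linear_combination ((1/25)*(gc^(2*j+2))^2 + (-1/25)*(gr^(2*j+2))*(gc^(2*j+2)) + (1/2)*gc*(gc^(2*j+2)) + (1/25)*gc*(gc^(2*j+2))^2 + (-1/25)*gc*(gr^(2*j+2))*(gc^(2*j+2)) + (-4/25)*gc^2*(gc^(2*j+2))^2 + (-1/25)*gc^2*(gr^(2*j+2))*(gc^(2*j+2)) + (-1/5)*gc^3*(gc^(2*j+2))^2 + (-1/2)*gr*(gc^(2*j+2)) + (4/25)*gr*(gc^(2*j+2))^2 + (6/25)*gr*(gr^(2*j+2))*(gc^(2*j+2)) + (-1/2)*gr*gc*(gc^(2*j+2)) + (1/5)*gr*gc*(gc^(2*j+2))^2 + (1/5)*gr*gc*(gr^(2*j+2))*(gc^(2*j+2)) + (7/50)*gr*gc^2*(gc^(2*j+2))^2 + (4/25)*gr*gc^2*(gr^(2*j+2))*(gc^(2*j+2)) + (1/10)*gr*gc^3*(gc^(2*j+2))^2 + (1/2)*gr^2*(gc^(2*j+2)) + (-7/25)*gr^2*(gc^(2*j+2))^2 + (-13/25)*gr^2*(gr^(2*j+2))*(gc^(2*j+2)) + (-2/25)*gr^2*gc*(gc^(2*j+2))^2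 + (-8/25)*gr^2*gc*(gr^(2*j+2))*(gc^(2*j+2)) + (3/50)*gr^2*gc^2*(gc^(2*j+2))^2 + (-4/25)*gr^2*gc^2*(gr^(2*j+2))*(gc^(2*j+2)) + (1/50)*gr^3*(gc^(2*j+2))^2 + (12/25)*gr^3*(gr^(2*j+2))*(gc^(2*j+2)) + (-3/50)*gr^3*gc*(gc^(2*j+2))^2 + (4/25)*gr^3*gc*(gr^(2*j+2))*(gc^(2*j+2)) + (3/50)*gr^4*(gc^(2*j+2))^2 + (-4/25)*gr^4*(gr^(2*j+2))*(gc^(2*j+2))) * hgc + ((1/2)*(gc^(2*j+2)) + (-6/25)*(gc^(2*j+2))^2 + (-19/25)*(gr^(2*j+2))*(gc^(2*j+2)) + (-1/10)*(gr^(2*j+2))^2 + (-1/2)*gr*(gc^(2*j+2)) + (11/50)*gr*(gc^(2*j+2))^2 + (1/2)*gr*(gr^(2*j+2)) + (12/25)*gr*(gr^(2*j+2))*(gc^(2*j+2)) + (-1/50)*gr^2*(gc^(2*j+2))^2 + (-12/25)*gr^2*(gr^(2*j+2))*(gc^(2*j+2)) + (-1/5)*gr^2*(gr^(2*j+2))^2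 + (-3/50)*gr^3*(gc^(2*j+2))^2 + (3/50)*gr^3*(gr^(2*j+2))^2) * hf + ((-4/5)) * hxz
    have ee2 : S 2 (2*j+4) = ((109/150)*(gc^(2*j+4)) + (-7/10)*(gc^(2*j+4))^2 + (11/75)*(gc^(2*j+4))^3 + (11/150)*(gr^(2*j+4)) + (-3/10)*(gr^(2*j+4))^2 + (4/75)*(gr^(2*j+4))^3 + (-49/75)*gr*(gc^(2*j+4)) + (2/5)*gr*(gc^(2*j+4))^2 + (-7/75)*gr*(gc^(2*j+4))^3 + (49/75)*gr*(gr^(2*j+4)) + (-2/5)*gr*(gr^(2*j+4))^2 + (7/75)*gr*(gr^(2*j+4))^3) := by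
      have hrec := recur_odd (2*j+2) heven 2
      rw [show 2*j+2+2 = 2*j+4 by omega, show 2*j+2+3 = 2*j+5 by omega,
        show 2*j+2+1 = 2*j+3 by omega] at hrec
      rw [hrec, expand2 (2*j+2), ih1e, ih2e, eo2, fibR' (2*j+5), fibR' (2*j+2)]
      have hxz := hxze
      linear_combination ((9/25)*(gc^(2*j+2)) + (-1/5)*(gc^(2*j+2))^2 + (11/125)*(gc^(2*j+2))^3 + (-1/125)*(gr^(2*j+2))*(gc^(2*j+2))^2 + (1/25)*(gr^(2*j+2))^2*(gc^(2*j+2)) + (-97/150)*gc*(gc^(2*j+2)) + (-1/5)*gc*(gc^(2*j+2))^2 + (11/125)*gc*(gc^(2*j+2))^3 + (-1/125)*gc*(gr^(2*j+2))*(gc^(2*j+2))^2 + (1/25)*gc*(gr^(2*j+2))^2*(gc^(2*j+2)) + (2/25)*gc^2*(gc^(2*j+2)) + (1/2)*gc^2*(gc^(2*j+2))^2 + (11/125)*gc^2*(gc^(2*j+2))^3 + (-1/125)*gc^2*(gr^(2*j+2))*(gc^(2*j+2))^2 + (1/25)*gc^2*(gr^(2*j+2))^2*(gc^(2*j+2))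 + (7/10)*gc^3*(gc^(2*j+2))^2 + (-52/375)*gc^3*(gc^(2*j+2))^3 + (-1/125)*gc^3*(gr^(2*j+2))*(gc^(2*j+2))^2 + (-52/375)*gc^4*(gc^(2*j+2))^3 + (-1/125)*gc^4*(gr^(2*j+2))*(gc^(2*j+2))^2 + (-52/375)*gc^5*(gc^(2*j+2))^3 + (-1/125)*gc^5*(gr^(2*j+2))*(gc^(2*j+2))^2 + (37/150)*gr*(gc^(2*j+2)) + (-2/5)*gr*(gc^(2*j+2))^2 + (-1/125)*gr*(gc^(2*j+2))^3 + (-1/5)*gr*(gr^(2*j+2))*(gc^(2*j+2)) + (11/125)*gr*(gr^(2*j+2))*(gc^(2*j+2))^2 + (-3/25)*gr*(gr^(2*j+2))^2*(gc^(2*j+2)) + (31/75)*gr*gc*(gc^(2*j+2)) + (-3/5)*gr*gc*(gc^(2*j+2))^2 + (2/25)*gr*gc*(gc^(2*j+2))^3 + (-1/5)*gr*gc*(gr^(2*j+2))*(gc^(2*j+2)) + (2/25)*gr*gc*(gr^(2*j+2))*(gc^(2*j+2))^2 + (-2/25)*gr*gc*(gr^(2*j+2))^2*(gc^(2*j+2))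 + (-4/25)*gr*gc^2*(gc^(2*j+2)) + (-1/2)*gr*gc^2*(gc^(2*j+2))^2 + (21/125)*gr*gc^2*(gc^(2*j+2))^3 + (-1/5)*gr*gc^2*(gr^(2*j+2))*(gc^(2*j+2)) + (9/125)*gr*gc^2*(gr^(2*j+2))*(gc^(2*j+2))^2 + (-1/25)*gr*gc^2*(gr^(2*j+2))^2*(gc^(2*j+2)) + (-2/5)*gr*gc^3*(gc^(2*j+2))^2 + (121/375)*gr*gc^3*(gc^(2*j+2))^3 + (8/125)*gr*gc^3*(gr^(2*j+2))*(gc^(2*j+2))^2 + (23/125)*gr*gc^4*(gc^(2*j+2))^3 + (7/125)*gr*gc^4*(gr^(2*j+2))*(gc^(2*j+2))^2 + (17/375)*gr*gc^5*(gc^(2*j+2))^3 + (6/125)*gr*gc^5*(gr^(2*j+2))*(gc^(2*j+2))^2 + (-19/75)*gr^2*(gc^(2*j+2)) + (11/10)*gr^2*(gc^(2*j+2))^2 + (-78/125)*gr^2*(gc^(2*j+2))^3 + (4/5)*gr^2*(gr^(2*j+2))*(gc^(2*j+2)) + (-52/125)*gr^2*(gr^(2*j+2))*(gc^(2*j+2))^2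 + (1/25)*gr^2*(gr^(2*j+2))^2*(gc^(2*j+2)) + (4/25)*gr^2*gc*(gc^(2*j+2)) + (1/2)*gr^2*gc*(gc^(2*j+2))^2 + (-68/125)*gr^2*gc*(gc^(2*j+2))^3 + (3/5)*gr^2*gc*(gr^(2*j+2))*(gc^(2*j+2)) + (-42/125)*gr^2*gc*(gr^(2*j+2))*(gc^(2*j+2))^2 + (-1/25)*gr^2*gc*(gr^(2*j+2))^2*(gc^(2*j+2)) + (-47/125)*gr^2*gc^2*(gc^(2*j+2))^3 + (2/5)*gr^2*gc^2*(gr^(2*j+2))*(gc^(2*j+2)) + (-33/125)*gr^2*gc^2*(gr^(2*j+2))*(gc^(2*j+2))^2 + (-2/25)*gr^2*gc^2*(gr^(2*j+2))^2*(gc^(2*j+2)) + (-2/15)*gr^2*gc^3*(gc^(2*j+2))^3 + (-1/5)*gr^2*gc^3*(gr^(2*j+2))*(gc^(2*j+2))^2 + (19/375)*gr^2*gc^4*(gc^(2*j+2))^3 + (-18/125)*gr^2*gc^4*(gr^(2*j+2))*(gc^(2*j+2))^2 + (12/125)*gr^2*gc^5*(gc^(2*j+2))^3 + (-12/125)*gr^2*gc^5*(gr^(2*j+2))*(gc^(2*j+2))^2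 + (-4/25)*gr^3*(gc^(2*j+2)) + (-1/2)*gr^3*(gc^(2*j+2))^2 + (316/375)*gr^3*(gc^(2*j+2))^3 + (-1)*gr^3*(gr^(2*j+2))*(gc^(2*j+2)) + (136/125)*gr^3*(gr^(2*j+2))*(gc^(2*j+2))^2 + (17/125)*gr^3*(gr^(2*j+2))^2*(gc^(2*j+2)) + (112/375)*gr^3*gc*(gc^(2*j+2))^3 + (-2/5)*gr^3*gc*(gr^(2*j+2))*(gc^(2*j+2)) + (94/125)*gr^3*gc*(gr^(2*j+2))*(gc^(2*j+2))^2 + (12/125)*gr^3*gc*(gr^(2*j+2))^2*(gc^(2*j+2)) + (-29/375)*gr^3*gc^2*(gc^(2*j+2))^3 + (61/125)*gr^3*gc^2*(gr^(2*j+2))*(gc^(2*j+2))^2 + (2/125)*gr^3*gc^2*(gr^(2*j+2))^2*(gc^(2*j+2)) + (-79/375)*gr^3*gc^3*(gc^(2*j+2))^3 + (38/125)*gr^3*gc^3*(gr^(2*j+2))*(gc^(2*j+2))^2 + (-4/25)*gr^3*gc^4*(gc^(2*j+2))^3 + (4/25)*gr^3*gc^4*(gr^(2*j+2))*(gc^(2*j+2))^2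 + (-8/125)*gr^3*gc^5*(gc^(2*j+2))^3 + (8/125)*gr^3*gc^5*(gr^(2*j+2))*(gc^(2*j+2))^2 + (16/75)*gr^4*(gc^(2*j+2))^3 + (2/5)*gr^4*(gr^(2*j+2))*(gc^(2*j+2)) + (-209/125)*gr^4*(gr^(2*j+2))*(gc^(2*j+2))^2 + (-26/125)*gr^4*(gr^(2*j+2))^2*(gc^(2*j+2)) + (64/125)*gr^4*gc*(gc^(2*j+2))^3 + (-23/25)*gr^4*gc*(gr^(2*j+2))*(gc^(2*j+2))^2 + (-14/125)*gr^4*gc*(gr^(2*j+2))^2*(gc^(2*j+2)) + (163/375)*gr^4*gc^2*(gc^(2*j+2))^3 + (-54/125)*gr^4*gc^2*(gr^(2*j+2))*(gc^(2*j+2))^2 + (-12/125)*gr^4*gc^2*(gr^(2*j+2))^2*(gc^(2*j+2)) + (28/125)*gr^4*gc^3*(gc^(2*j+2))^3 + (-28/125)*gr^4*gc^3*(gr^(2*j+2))*(gc^(2*j+2))^2 + (8/125)*gr^4*gc^4*(gc^(2*j+2))^3 + (-8/125)*gr^4*gc^4*(gr^(2*j+2))*(gc^(2*j+2))^2 + (-463/375)*gr^5*(gc^(2*j+2))^3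 + (181/125)*gr^5*(gr^(2*j+2))*(gc^(2*j+2))^2 + (2/5)*gr^5*(gr^(2*j+2))^2*(gc^(2*j+2)) + (-271/375)*gr^5*gc*(gc^(2*j+2))^3 + (66/125)*gr^5*gc*(gr^(2*j+2))*(gc^(2*j+2))^2 + (36/125)*gr^5*gc*(gr^(2*j+2))^2*(gc^(2*j+2)) + (-36/125)*gr^5*gc^2*(gc^(2*j+2))^3 + (12/125)*gr^5*gc^2*(gr^(2*j+2))*(gc^(2*j+2))^2 + (24/125)*gr^5*gc^2*(gr^(2*j+2))^2*(gc^(2*j+2)) + (-8/125)*gr^5*gc^3*(gc^(2*j+2))^3 + (8/125)*gr^5*gc^3*(gr^(2*j+2))*(gc^(2*j+2))^2 + (403/375)*gr^6*(gc^(2*j+2))^3 + (-14/25)*gr^6*(gr^(2*j+2))*(gc^(2*j+2))^2 + (-76/125)*gr^6*(gr^(2*j+2))^2*(gc^(2*j+2)) + (44/125)*gr^6*gc*(gc^(2*j+2))^3 + (-4/125)*gr^6*gc*(gr^(2*j+2))*(gc^(2*j+2))^2 + (-8/25)*gr^6*gc*(gr^(2*j+2))^2*(gc^(2*j+2)) +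 (8/125)*gr^6*gc^2*(gc^(2*j+2))^3 + (8/125)*gr^6*gc^2*(gr^(2*j+2))*(gc^(2*j+2))^2 + (-16/125)*gr^6*gc^2*(gr^(2*j+2))^2*(gc^(2*j+2)) + (-52/125)*gr^7*(gc^(2*j+2))^3 + (-4/125)*gr^7*(gr^(2*j+2))*(gc^(2*j+2))^2 + (56/125)*gr^7*(gr^(2*j+2))^2*(gc^(2*j+2)) + (-8/125)*gr^7*gc*(gc^(2*j+2))^3 + (-8/125)*gr^7*gc*(gr^(2*j+2))*(gc^(2*j+2))^2 + (16/125)*gr^7*gc*(gr^(2*j+2))^2*(gc^(2*j+2)) + (8/125)*gr^8*(gc^(2*j+2))^3 + (8/125)*gr^8*(gr^(2*j+2))*(gc^(2*j+2))^2 + (-16/125)*gr^8*(gr^(2*j+2))^2*(gc^(2*j+2))) * hgc + ((-13/150)*(gc^(2*j+2)) + (9/10)*(gc^(2*j+2))^2 + (-88/375)*(gc^(2*j+2))^3 + (49/150)*(gr^(2*j+2)) + (1)*(gr^(2*j+2))*(gc^(2*j+2)) + (-124/125)*(gr^(2*j+2))*(gc^(2*j+2))^2 + (3/10)*(gr^(2*j+2))^2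 + (-11/25)*(gr^(2*j+2))^2*(gc^(2*j+2)) + (-4/75)*(gr^(2*j+2))^3 + (19/75)*gr*(gc^(2*j+2)) + (-11/10)*gr*(gc^(2*j+2))^2 + (53/125)*gr*(gc^(2*j+2))^3 + (-43/75)*gr*(gr^(2*j+2)) + (-4/5)*gr*(gr^(2*j+2))*(gc^(2*j+2)) + (187/125)*gr*(gr^(2*j+2))*(gc^(2*j+2))^2 + (1/10)*gr*(gr^(2*j+2))^2 + (-1/25)*gr*(gr^(2*j+2))^3 + (4/25)*gr^2*(gc^(2*j+2)) + (1/2)*gr^2*(gc^(2*j+2))^2 + (-16/375)*gr^2*(gc^(2*j+2))^3 + (4/25)*gr^2*(gr^(2*j+2)) + (4/5)*gr^2*(gr^(2*j+2))*(gc^(2*j+2)) + (-248/125)*gr^2*(gr^(2*j+2))*(gc^(2*j+2))^2 + (1/2)*gr^2*(gr^(2*j+2))^2 + (-3/5)*gr^2*(gr^(2*j+2))^2*(gc^(2*j+2)) + (-1/75)*gr^2*(gr^(2*j+2))^3 + (-1)*gr^3*(gc^(2*j+2))^3 + (257/125)*gr^3*(gr^(2*j+2))*(gc^(2*j+2))^2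 + (63/125)*gr^3*(gr^(2*j+2))^2*(gc^(2*j+2)) + (-1/25)*gr^3*(gr^(2*j+2))^3 + (119/75)*gr^4*(gc^(2*j+2))^3 + (-37/25)*gr^4*(gr^(2*j+2))*(gc^(2*j+2))^2 + (-19/25)*gr^4*(gr^(2*j+2))^2*(gc^(2*j+2)) + (-8/75)*gr^4*(gr^(2*j+2))^3 + (-427/375)*gr^5*(gc^(2*j+2))^3 + (62/125)*gr^5*(gr^(2*j+2))*(gc^(2*j+2))^2 + (82/125)*gr^5*(gr^(2*j+2))^2*(gc^(2*j+2)) + (-1/75)*gr^5*(gr^(2*j+2))^3 + (52/125)*gr^6*(gc^(2*j+2))^3 + (4/125)*gr^6*(gr^(2*j+2))*(gc^(2*j+2))^2 + (-52/125)*gr^6*(gr^(2*j+2))^2*(gc^(2*j+2)) + (-4/125)*gr^6*(gr^(2*j+2))^3 + (-8/125)*gr^7*(gc^(2*j+2))^3 + (-8/125)*gr^7*(gr^(2*j+2))*(gc^(2*j+2))^2 + (8/125)*gr^7*(gr^(2*j+2))^2*(gc^(2*j+2)) + (8/125)*gr^7*(gr^(2*j+2))^3) * hf + ((1) + (-1)*(gc^(2*j+2))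 + (-2/5)*(gr^(2*j+2)) + (3/5)*gr*(gc^(2*j+2)) + (-3/5)*gr*(gr^(2*j+2))) * hxz
    have ee3 : S 3 (2*j+4) = ((-23/50) + (-4/5)*(gc^(2*j+4)) + (161/100)*(gc^(2*j+4))^2 + (-4/5)*(gc^(2*j+4))^3 + (13/100)*(gc^(2*j+4))^4 + (-1/10)*(gr^(2*j+4)) + (67/100)*(gr^(2*j+4))^2 + (-3/10)*(gr^(2*j+4))^3 + (1/20)*(gr^(2*j+4))^4 + (7/10)*gr*(gc^(2*j+4)) + (-47/50)*gr*(gc^(2*j+4))^2 + (1/2)*gr*(gc^(2*j+4))^3 + (-2/25)*gr*(gc^(2*j+4))^4 + (-7/10)*gr*(gr^(2*j+4)) + (47/50)*gr*(gr^(2*j+4))^2 + (-1/2)*gr*(gr^(2*j+4))^3 + (2/25)*gr*(gr^(2*j+4))^4) := by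
      have hrec := recur_odd (2*j+2) heven 3
      rw [show 2*j+2+2 = 2*j+4 by omega, show 2*j+2+3 = 2*j+5 by omega,
        show 2*j+2+1 = 2*j+3 by omega] at hrec
      rw [hrec, expand3 (2*j+2), ih1e, ih2e, ih3e, eo3, fibR' (2*j+5), fibR' (2*j+2)]
      have hxz := hxze
      linear_combination ((-9/10)*(gc^(2*j+2)) + (16/25)*(gc^(2*j+2))^2 + (-12/25)*(gc^(2*j+2))^3 + (71/625)*(gc^(2*j+2))^4 + (11/250)*(gr^(2*j+2))*(gc^(2*j+2)) + (-1/625)*(gr^(2*j+2))*(gc^(2*j+2))^3 + (-9/50)*(gr^(2*j+2))^2*(gc^(2*j+2)) + (3/250)*(gr^(2*j+2))^2*(gc^(2*j+2))^2 + (4/125)*(gr^(2*j+2))^3*(gc^(2*j+2)) + (4/5)*gc*(gc^(2*j+2)) + (16/25)*gc*(gc^(2*j+2))^2 + (-12/25)*gc*(gc^(2*j+2))^3 + (71/625)*gc*(gc^(2*j+2))^4 + (11/250)*gc*(gr^(2*j+2))*(gc^(2*j+2)) + (-1/625)*gc*(gr^(2*j+2))*(gc^(2*j+2))^3 + (-9/50)*gc*(gr^(2*j+2))^2*(gc^(2*j+2))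 + (3/250)*gc*(gr^(2*j+2))^2*(gc^(2*j+2))^2 + (4/125)*gc*(gr^(2*j+2))^3*(gc^(2*j+2)) + (-23/20)*gc^2*(gc^(2*j+2))^2 + (-12/25)*gc^2*(gc^(2*j+2))^3 + (71/625)*gc^2*(gc^(2*j+2))^4 + (11/250)*gc^2*(gr^(2*j+2))*(gc^(2*j+2)) + (-1/625)*gc^2*(gr^(2*j+2))*(gc^(2*j+2))^3 + (-9/50)*gc^2*(gr^(2*j+2))^2*(gc^(2*j+2)) + (3/250)*gc^2*(gr^(2*j+2))^2*(gc^(2*j+2))^2 + (4/125)*gc^2*(gr^(2*j+2))^3*(gc^(2*j+2)) + (-793/500)*gc^3*(gc^(2*j+2))^2 + (37/50)*gc^3*(gc^(2*j+2))^3 + (16/625)*gc^3*(gc^(2*j+2))^4 + (-1/625)*gc^3*(gr^(2*j+2))*(gc^(2*j+2))^3 + (3/250)*gc^3*(gr^(2*j+2))^2*(gc^(2*j+2))^2 + (3/125)*gc^4*(gc^(2*j+2))^2 + (37/50)*gc^4*(gc^(2*j+2))^3 + (-261/2500)*gc^4*(gc^(2*j+2))^4 + (-1/625)*gc^4*(gr^(2*j+2))*(gc^(2*j+2))^3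 + (3/250)*gc^4*(gr^(2*j+2))^2*(gc^(2*j+2))^2 + (3/125)*gc^5*(gc^(2*j+2))^2 + (37/50)*gc^5*(gc^(2*j+2))^3 + (-261/2500)*gc^5*(gc^(2*j+2))^4 + (-1/625)*gc^5*(gr^(2*j+2))*(gc^(2*j+2))^3 + (3/250)*gc^5*(gr^(2*j+2))^2*(gc^(2*j+2))^2 + (-321/2500)*gc^6*(gc^(2*j+2))^4 + (-1/625)*gc^6*(gr^(2*j+2))*(gc^(2*j+2))^3 + (-321/2500)*gc^7*(gc^(2*j+2))^4 + (-1/625)*gc^7*(gr^(2*j+2))*(gc^(2*j+2))^3 + (1/625)*gc^8*(gc^(2*j+2))^4 + (-1/625)*gc^8*(gr^(2*j+2))*(gc^(2*j+2))^3 + (-1/5)*gr*(gc^(2*j+2)) + (71/125)*gr*(gc^(2*j+2))^2 + (3/25)*gr*(gc^(2*j+2))^3 + (-177/1250)*gr*(gc^(2*j+2))^4 + (27/125)*gr*(gr^(2*j+2))*(gc^(2*j+2)) + (-3/50)*gr*(gr^(2*j+2))*(gc^(2*j+2))^2 + (16/625)*gr*(gr^(2*j+2))*(gc^(2*j+2))^3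 + (12/25)*gr*(gr^(2*j+2))^2*(gc^(2*j+2)) + (-12/125)*gr*(gr^(2*j+2))^2*(gc^(2*j+2))^2 + (-9/125)*gr*(gr^(2*j+2))^3*(gc^(2*j+2)) + (-7/10)*gr*gc*(gc^(2*j+2)) + (151/125)*gr*gc*(gc^(2*j+2))^2 + (-9/25)*gr*gc*(gc^(2*j+2))^3 + (-7/250)*gr*gc*(gc^(2*j+2))^4 + (13/50)*gr*gc*(gr^(2*j+2))*(gc^(2*j+2)) + (-3/50)*gr*gc*(gr^(2*j+2))*(gc^(2*j+2))^2 + (3/125)*gr*gc*(gr^(2*j+2))*(gc^(2*j+2))^3 + (3/10)*gr*gc*(gr^(2*j+2))^2*(gc^(2*j+2)) + (-21/250)*gr*gc*(gr^(2*j+2))^2*(gc^(2*j+2))^2 + (-1/25)*gr*gc*(gr^(2*j+2))^3*(gc^(2*j+2)) + (559/500)*gr*gc^2*(gc^(2*j+2))^2 + (-21/25)*gr*gc^2*(gc^(2*j+2))^3 + (107/1250)*gr*gc^2*(gc^(2*j+2))^4 + (38/125)*gr*gc^2*(gr^(2*j+2))*(gc^(2*j+2)) + (-3/50)*gr*gc^2*(gr^(2*j+2))*(gc^(2*j+2))^2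 + (14/625)*gr*gc^2*(gr^(2*j+2))*(gc^(2*j+2))^3 + (3/25)*gr*gc^2*(gr^(2*j+2))^2*(gc^(2*j+2)) + (-9/125)*gr*gc^2*(gr^(2*j+2))^2*(gc^(2*j+2))^2 + (-1/125)*gr*gc^2*(gr^(2*j+2))^3*(gc^(2*j+2)) + (199/250)*gr*gc^3*(gc^(2*j+2))^2 + (-42/25)*gr*gc^3*(gc^(2*j+2))^3 + (429/1250)*gr*gc^3*(gc^(2*j+2))^4 + (-3/50)*gr*gc^3*(gr^(2*j+2))*(gc^(2*j+2))^2 + (13/625)*gr*gc^3*(gr^(2*j+2))*(gc^(2*j+2))^3 + (-3/50)*gr*gc^3*(gr^(2*j+2))^2*(gc^(2*j+2))^2 + (-3/25)*gr*gc^4*(gc^(2*j+2))^2 + (-47/50)*gr*gc^4*(gc^(2*j+2))^3 + (797/2500)*gr*gc^4*(gc^(2*j+2))^4 + (-3/50)*gr*gc^4*(gr^(2*j+2))*(gc^(2*j+2))^2 + (12/625)*gr*gc^4*(gr^(2*j+2))*(gc^(2*j+2))^3 + (-6/125)*gr*gc^4*(gr^(2*j+2))^2*(gc^(2*j+2))^2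 + (-12/125)*gr*gc^5*(gc^(2*j+2))^2 + (-1/5)*gr*gc^5*(gc^(2*j+2))^3 + (134/625)*gr*gc^5*(gc^(2*j+2))^4 + (-3/50)*gr*gc^5*(gr^(2*j+2))*(gc^(2*j+2))^2 + (11/625)*gr*gc^5*(gr^(2*j+2))*(gc^(2*j+2))^3 + (-9/250)*gr*gc^5*(gr^(2*j+2))^2*(gc^(2*j+2))^2 + (97/500)*gr*gc^6*(gc^(2*j+2))^4 + (2/125)*gr*gc^6*(gr^(2*j+2))*(gc^(2*j+2))^3 + (41/625)*gr*gc^7*(gc^(2*j+2))^4 + (9/625)*gr*gc^7*(gr^(2*j+2))*(gc^(2*j+2))^3 + (-8/625)*gr*gc^8*(gc^(2*j+2))^4 + (8/625)*gr*gc^8*(gr^(2*j+2))*(gc^(2*j+2))^3 + (7/10)*gr^2*(gc^(2*j+2)) + (-1013/500)*gr^2*(gc^(2*j+2))^2 + (153/50)*gr^2*(gc^(2*j+2))^3 + (-554/625)*gr^2*(gc^(2*j+2))^4 + (-337/250)*gr^2*(gr^(2*j+2))*(gc^(2*j+2)) + (27/50)*gr^2*(gr^(2*j+2))*(gc^(2*j+2))^2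 + (-116/625)*gr^2*(gr^(2*j+2))*(gc^(2*j+2))^3 + (3/50)*gr^2*(gr^(2*j+2))^2*(gc^(2*j+2)) + (3/10)*gr^2*(gr^(2*j+2))^2*(gc^(2*j+2))^2 + (-8/125)*gr^2*(gr^(2*j+2))^3*(gc^(2*j+2)) + (-409/500)*gr^2*gc*(gc^(2*j+2))^2 + (27/10)*gr^2*gc*(gc^(2*j+2))^3 + (-1143/1250)*gr^2*gc*(gc^(2*j+2))^4 + (-136/125)*gr^2*gc*(gr^(2*j+2))*(gc^(2*j+2)) + (12/25)*gr^2*gc*(gr^(2*j+2))*(gc^(2*j+2))^2 + (-101/625)*gr^2*gc*(gr^(2*j+2))*(gc^(2*j+2))^3 + (9/25)*gr^2*gc*(gr^(2*j+2))^2*(gc^(2*j+2)) + (27/125)*gr^2*gc*(gr^(2*j+2))^2*(gc^(2*j+2))^2 + (-13/125)*gr^2*gc*(gr^(2*j+2))^3*(gc^(2*j+2)) + (3/10)*gr^2*gc^2*(gc^(2*j+2))^2 + (93/50)*gr^2*gc^2*(gc^(2*j+2))^3 + (-518/625)*gr^2*gc^2*(gc^(2*j+2))^4 + (-98/125)*gr^2*gc^2*(gr^(2*j+2))*(gc^(2*j+2))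 + (21/50)*gr^2*gc^2*(gr^(2*j+2))*(gc^(2*j+2))^2 + (-87/625)*gr^2*gc^2*(gr^(2*j+2))*(gc^(2*j+2))^3 + (12/25)*gr^2*gc^2*(gr^(2*j+2))^2*(gc^(2*j+2)) + (18/125)*gr^2*gc^2*(gr^(2*j+2))^2*(gc^(2*j+2))^2 + (-14/125)*gr^2*gc^2*(gr^(2*j+2))^3*(gc^(2*j+2)) + (39/125)*gr^2*gc^3*(gc^(2*j+2))^2 + (33/50)*gr^2*gc^3*(gc^(2*j+2))^3 + (-747/1250)*gr^2*gc^3*(gc^(2*j+2))^4 + (9/25)*gr^2*gc^3*(gr^(2*j+2))*(gc^(2*j+2))^2 + (-74/625)*gr^2*gc^3*(gr^(2*j+2))*(gc^(2*j+2))^3 + (21/250)*gr^2*gc^3*(gr^(2*j+2))^2*(gc^(2*j+2))^2 + (24/125)*gr^2*gc^4*(gc^(2*j+2))^2 + (-7/25)*gr^2*gc^4*(gc^(2*j+2))^3 + (-697/2500)*gr^2*gc^4*(gc^(2*j+2))^4 + (3/10)*gr^2*gc^4*(gr^(2*j+2))*(gc^(2*j+2))^2 + (-62/625)*gr^2*gc^4*(gr^(2*j+2))*(gc^(2*j+2))^3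 + (9/250)*gr^2*gc^4*(gr^(2*j+2))^2*(gc^(2*j+2))^2 + (12/125)*gr^2*gc^5*(gc^(2*j+2))^2 + (-12/25)*gr^2*gc^5*(gc^(2*j+2))^3 + (-161/2500)*gr^2*gc^5*(gc^(2*j+2))^4 + (6/25)*gr^2*gc^5*(gr^(2*j+2))*(gc^(2*j+2))^2 + (-51/625)*gr^2*gc^5*(gr^(2*j+2))*(gc^(2*j+2))^3 + (-9/625)*gr^2*gc^6*(gc^(2*j+2))^4 + (-41/625)*gr^2*gc^6*(gr^(2*j+2))*(gc^(2*j+2))^3 + (32/625)*gr^2*gc^7*(gc^(2*j+2))^4 + (-32/625)*gr^2*gc^7*(gr^(2*j+2))*(gc^(2*j+2))^3 + (24/625)*gr^2*gc^8*(gc^(2*j+2))^4 + (-24/625)*gr^2*gc^8*(gr^(2*j+2))*(gc^(2*j+2))^3 + (-41/500)*gr^3*(gc^(2*j+2))^2 + (-211/50)*gr^3*(gc^(2*j+2))^3 + (3137/1250)*gr^3*(gc^(2*j+2))^4 + (228/125)*gr^3*(gr^(2*j+2))*(gc^(2*j+2)) + (-48/25)*gr^3*(gr^(2*j+2))*(gc^(2*j+2))^2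 + (471/625)*gr^3*(gr^(2*j+2))*(gc^(2*j+2))^3 + (-21/25)*gr^3*(gr^(2*j+2))^2*(gc^(2*j+2)) + (-267/625)*gr^3*(gr^(2*j+2))^2*(gc^(2*j+2))^2 + (24/125)*gr^3*(gr^(2*j+2))^3*(gc^(2*j+2)) + (-9/10)*gr^3*gc*(gc^(2*j+2))^2 + (-38/25)*gr^3*gc*(gc^(2*j+2))^3 + (997/625)*gr^3*gc*(gc^(2*j+2))^4 + (92/125)*gr^3*gc*(gr^(2*j+2))*(gc^(2*j+2)) + (-36/25)*gr^3*gc*(gr^(2*j+2))*(gc^(2*j+2))^2 + (74/125)*gr^3*gc*(gr^(2*j+2))*(gc^(2*j+2))^3 + (-12/25)*gr^3*gc*(gr^(2*j+2))^2*(gc^(2*j+2)) + (-132/625)*gr^3*gc*(gr^(2*j+2))^2*(gc^(2*j+2))^2 + (11/125)*gr^3*gc*(gr^(2*j+2))^3*(gc^(2*j+2)) + (-3/5)*gr^3*gc^2*(gc^(2*j+2))^2 + (17/50)*gr^3*gc^2*(gc^(2*j+2))^3 + (479/625)*gr^3*gc^2*(gc^(2*j+2))^4 + (-6/125)*gr^3*gc^2*(gr^(2*j+2))*(gc^(2*j+2))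 + (-51/50)*gr^3*gc^2*(gr^(2*j+2))*(gc^(2*j+2))^2 + (283/625)*gr^3*gc^2*(gr^(2*j+2))*(gc^(2*j+2))^3 + (-42/625)*gr^3*gc^2*(gr^(2*j+2))^2*(gc^(2*j+2))^2 + (-3/125)*gr^3*gc^2*(gr^(2*j+2))^3*(gc^(2*j+2)) + (-36/125)*gr^3*gc^3*(gc^(2*j+2))^2 + (1)*gr^3*gc^3*(gc^(2*j+2))^3 + (211/1250)*gr^3*gc^3*(gc^(2*j+2))^4 + (-39/50)*gr^3*gc^3*(gr^(2*j+2))*(gc^(2*j+2))^2 + (239/625)*gr^3*gc^3*(gr^(2*j+2))*(gc^(2*j+2))^3 + (21/1250)*gr^3*gc^3*(gr^(2*j+2))^2*(gc^(2*j+2))^2 + (-12/125)*gr^3*gc^4*(gc^(2*j+2))^2 + (18/25)*gr^3*gc^4*(gc^(2*j+2))^3 + (-11/100)*gr^3*gc^4*(gc^(2*j+2))^4 + (-12/25)*gr^3*gc^4*(gr^(2*j+2))*(gc^(2*j+2))^2 + (177/625)*gr^3*gc^4*(gr^(2*j+2))*(gc^(2*j+2))^3 + (33/625)*gr^3*gc^4*(gr^(2*j+2))^2*(gc^(2*j+2))^2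 + (6/25)*gr^3*gc^5*(gc^(2*j+2))^3 + (-109/625)*gr^3*gc^5*(gc^(2*j+2))^4 + (-6/25)*gr^3*gc^5*(gr^(2*j+2))*(gc^(2*j+2))^2 + (126/625)*gr^3*gc^5*(gr^(2*j+2))*(gc^(2*j+2))^3 + (33/625)*gr^3*gc^5*(gr^(2*j+2))^2*(gc^(2*j+2))^2 + (-88/625)*gr^3*gc^6*(gc^(2*j+2))^4 + (88/625)*gr^3*gc^6*(gr^(2*j+2))*(gc^(2*j+2))^3 + (-56/625)*gr^3*gc^7*(gc^(2*j+2))^4 + (56/625)*gr^3*gc^7*(gr^(2*j+2))*(gc^(2*j+2))^3 + (-32/625)*gr^3*gc^8*(gc^(2*j+2))^4 + (32/625)*gr^3*gc^8*(gr^(2*j+2))*(gc^(2*j+2))^3 + (471/250)*gr^4*(gc^(2*j+2))^2 + (-39/50)*gr^4*(gc^(2*j+2))^3 + (-4847/2500)*gr^4*(gc^(2*j+2))^4 + (-62/125)*gr^4*(gr^(2*j+2))*(gc^(2*j+2)) + (84/25)*gr^4*(gr^(2*j+2))*(gc^(2*j+2))^2 + (-1228/625)*gr^4*(gr^(2*j+2))*(gc^(2*j+2))^3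 + (3/5)*gr^4*(gr^(2*j+2))^2*(gc^(2*j+2)) + (147/1250)*gr^4*(gr^(2*j+2))^2*(gc^(2*j+2))^2 + (1/125)*gr^4*(gr^(2*j+2))^3*(gc^(2*j+2)) + (123/125)*gr^4*gc*(gc^(2*j+2))^2 + (-23/10)*gr^4*gc*(gc^(2*j+2))^3 + (-859/2500)*gr^4*gc*(gc^(2*j+2))^4 + (6/25)*gr^4*gc*(gr^(2*j+2))*(gc^(2*j+2)) + (48/25)*gr^4*gc*(gr^(2*j+2))*(gc^(2*j+2))^2 + (-858/625)*gr^4*gc*(gr^(2*j+2))*(gc^(2*j+2))^3 + (3/25)*gr^4*gc*(gr^(2*j+2))^2*(gc^(2*j+2)) + (-117/1250)*gr^4*gc*(gr^(2*j+2))^2*(gc^(2*j+2))^2 + (12/125)*gr^4*gc*(gr^(2*j+2))^3*(gc^(2*j+2)) + (48/125)*gr^4*gc^2*(gc^(2*j+2))^2 + (-49/25)*gr^4*gc^2*(gc^(2*j+2))^3 + (1057/2500)*gr^4*gc^2*(gc^(2*j+2))^4 + (24/125)*gr^4*gc^2*(gr^(2*j+2))*(gc^(2*j+2)) + (9/10)*gr^4*gc^2*(gr^(2*j+2))*(gc^(2*j+2))^2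 + (-23/25)*gr^4*gc^2*(gr^(2*j+2))*(gc^(2*j+2))^3 + (3/25)*gr^4*gc^2*(gr^(2*j+2))^2*(gc^(2*j+2)) + (-201/1250)*gr^4*gc^2*(gr^(2*j+2))^2*(gc^(2*j+2))^2 + (9/125)*gr^4*gc^2*(gr^(2*j+2))^3*(gc^(2*j+2)) + (12/125)*gr^4*gc^3*(gc^(2*j+2))^2 + (-24/25)*gr^4*gc^3*(gc^(2*j+2))^3 + (1479/2500)*gr^4*gc^3*(gc^(2*j+2))^4 + (18/25)*gr^4*gc^3*(gr^(2*j+2))*(gc^(2*j+2))^2 + (-471/625)*gr^4*gc^3*(gr^(2*j+2))*(gc^(2*j+2))^3 + (-18/125)*gr^4*gc^3*(gr^(2*j+2))^2*(gc^(2*j+2))^2 + (-6/25)*gr^4*gc^4*(gc^(2*j+2))^3 + (301/625)*gr^4*gc^4*(gc^(2*j+2))^4 + (6/25)*gr^4*gc^4*(gr^(2*j+2))*(gc^(2*j+2))^2 + (-294/625)*gr^4*gc^4*(gr^(2*j+2))*(gc^(2*j+2))^3 + (-57/625)*gr^4*gc^4*(gr^(2*j+2))^2*(gc^(2*j+2))^2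 + (192/625)*gr^4*gc^5*(gc^(2*j+2))^4 + (-168/625)*gr^4*gc^5*(gr^(2*j+2))*(gc^(2*j+2))^3 + (-24/625)*gr^4*gc^5*(gr^(2*j+2))^2*(gc^(2*j+2))^2 + (104/625)*gr^4*gc^6*(gc^(2*j+2))^4 + (-104/625)*gr^4*gc^6*(gr^(2*j+2))*(gc^(2*j+2))^3 + (48/625)*gr^4*gc^7*(gc^(2*j+2))^4 + (-48/625)*gr^4*gc^7*(gr^(2*j+2))*(gc^(2*j+2))^3 + (16/625)*gr^4*gc^8*(gc^(2*j+2))^4 + (-16/625)*gr^4*gc^8*(gr^(2*j+2))*(gc^(2*j+2))^3 + (-183/125)*gr^5*(gc^(2*j+2))^2 + (273/50)*gr^5*(gc^(2*j+2))^3 + (-4321/2500)*gr^5*(gc^(2*j+2))^4 + (-78/125)*gr^5*(gr^(2*j+2))*(gc^(2*j+2)) + (-141/50)*gr^5*(gr^(2*j+2))*(gc^(2*j+2))^2 + (2282/625)*gr^5*(gr^(2*j+2))*(gc^(2*j+2))^3 + (-18/25)*gr^5*(gr^(2*j+2))^2*(gc^(2*j+2)) + (402/625)*gr^5*(gr^(2*j+2))^2*(gc^(2*j+2))^2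 + (-21/125)*gr^5*(gr^(2*j+2))^3*(gc^(2*j+2)) + (-12/25)*gr^5*gc*(gc^(2*j+2))^2 + (79/25)*gr^5*gc*(gc^(2*j+2))^3 + (-259/125)*gr^5*gc*(gc^(2*j+2))^4 + (-48/125)*gr^5*gc*(gr^(2*j+2))*(gc^(2*j+2)) + (-9/10)*gr^5*gc*(gr^(2*j+2))*(gc^(2*j+2))^2 + (1424/625)*gr^5*gc*(gr^(2*j+2))*(gc^(2*j+2))^3 + (-3/5)*gr^5*gc*(gr^(2*j+2))^2*(gc^(2*j+2)) + (687/1250)*gr^5*gc*(gr^(2*j+2))^2*(gc^(2*j+2))^2 + (-9/125)*gr^5*gc*(gr^(2*j+2))^3*(gc^(2*j+2)) + (-12/125)*gr^5*gc^2*(gc^(2*j+2))^2 + (6/5)*gr^5*gc^2*(gc^(2*j+2))^3 + (-4123/2500)*gr^5*gc^2*(gc^(2*j+2))^4 + (-24/125)*gr^5*gc^2*(gr^(2*j+2))*(gc^(2*j+2)) + (849/625)*gr^5*gc^2*(gr^(2*j+2))*(gc^(2*j+2))^3 + (-12/25)*gr^5*gc^2*(gr^(2*j+2))^2*(gc^(2*j+2))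 + (243/625)*gr^5*gc^2*(gr^(2*j+2))^2*(gc^(2*j+2))^2 + (6/25)*gr^5*gc^3*(gc^(2*j+2))^3 + (-661/625)*gr^5*gc^3*(gc^(2*j+2))^4 + (-6/25)*gr^5*gc^3*(gr^(2*j+2))*(gc^(2*j+2))^2 + (558/625)*gr^5*gc^3*(gr^(2*j+2))*(gc^(2*j+2))^3 + (153/625)*gr^5*gc^3*(gr^(2*j+2))^2*(gc^(2*j+2))^2 + (-72/125)*gr^5*gc^4*(gc^(2*j+2))^4 + (264/625)*gr^5*gc^4*(gr^(2*j+2))*(gc^(2*j+2))^3 + (96/625)*gr^5*gc^4*(gr^(2*j+2))^2*(gc^(2*j+2))^2 + (-168/625)*gr^5*gc^5*(gc^(2*j+2))^4 + (96/625)*gr^5*gc^5*(gr^(2*j+2))*(gc^(2*j+2))^3 + (72/625)*gr^5*gc^5*(gr^(2*j+2))^2*(gc^(2*j+2))^2 + (-64/625)*gr^5*gc^6*(gc^(2*j+2))^4 + (64/625)*gr^5*gc^6*(gr^(2*j+2))*(gc^(2*j+2))^3 + (-16/625)*gr^5*gc^7*(gc^(2*j+2))^4 + (16/625)*gr^5*gc^7*(gr^(2*j+2))*(gc^(2*j+2))^3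 + (72/125)*gr^6*(gc^(2*j+2))^2 + (-23/5)*gr^6*(gc^(2*j+2))^3 + (14379/2500)*gr^6*(gc^(2*j+2))^4 + (72/125)*gr^6*(gr^(2*j+2))*(gc^(2*j+2)) + (33/50)*gr^6*(gr^(2*j+2))*(gc^(2*j+2))^2 + (-623/125)*gr^6*(gr^(2*j+2))*(gc^(2*j+2))^3 + (39/25)*gr^6*(gr^(2*j+2))^2*(gc^(2*j+2)) + (-2001/1250)*gr^6*(gr^(2*j+2))^2*(gc^(2*j+2))^2 + (-18/625)*gr^6*(gr^(2*j+2))^3*(gc^(2*j+2)) + (12/125)*gr^6*gc*(gc^(2*j+2))^2 + (-36/25)*gr^6*gc*(gc^(2*j+2))^3 + (9199/2500)*gr^6*gc*(gc^(2*j+2))^4 + (24/125)*gr^6*gc*(gr^(2*j+2))*(gc^(2*j+2)) + (-6/25)*gr^6*gc*(gr^(2*j+2))*(gc^(2*j+2))^2 + (-1691/625)*gr^6*gc*(gr^(2*j+2))*(gc^(2*j+2))^3 + (24/25)*gr^6*gc*(gr^(2*j+2))^2*(gc^(2*j+2)) + (-657/625)*gr^6*gc*(gr^(2*j+2))^2*(gc^(2*j+2))^2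 + (-63/625)*gr^6*gc*(gr^(2*j+2))^3*(gc^(2*j+2)) + (-6/25)*gr^6*gc^2*(gc^(2*j+2))^3 + (1269/625)*gr^6*gc^2*(gc^(2*j+2))^4 + (-6/25)*gr^6*gc^2*(gr^(2*j+2))*(gc^(2*j+2))^2 + (-842/625)*gr^6*gc^2*(gr^(2*j+2))*(gc^(2*j+2))^3 + (12/25)*gr^6*gc^2*(gr^(2*j+2))^2*(gc^(2*j+2)) + (-414/625)*gr^6*gc^2*(gr^(2*j+2))^2*(gc^(2*j+2))^2 + (-63/625)*gr^6*gc^2*(gr^(2*j+2))^3*(gc^(2*j+2)) + (608/625)*gr^6*gc^3*(gc^(2*j+2))^4 + (-344/625)*gr^6*gc^3*(gr^(2*j+2))*(gc^(2*j+2))^3 + (-264/625)*gr^6*gc^3*(gr^(2*j+2))^2*(gc^(2*j+2))^2 + (248/625)*gr^6*gc^4*(gc^(2*j+2))^4 + (-16/125)*gr^6*gc^4*(gr^(2*j+2))*(gc^(2*j+2))^3 + (-168/625)*gr^6*gc^4*(gr^(2*j+2))^2*(gc^(2*j+2))^2 + (16/125)*gr^6*gc^5*(gc^(2*j+2))^4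 + (16/625)*gr^6*gc^5*(gr^(2*j+2))*(gc^(2*j+2))^3 + (-96/625)*gr^6*gc^5*(gr^(2*j+2))^2*(gc^(2*j+2))^2 + (16/625)*gr^6*gc^6*(gc^(2*j+2))^4 + (-16/625)*gr^6*gc^6*(gr^(2*j+2))*(gc^(2*j+2))^3 + (-12/125)*gr^7*(gc^(2*j+2))^2 + (42/25)*gr^7*(gc^(2*j+2))^3 + (-18083/2500)*gr^7*(gc^(2*j+2))^4 + (-24/125)*gr^7*(gr^(2*j+2))*(gc^(2*j+2)) + (12/25)*gr^7*(gr^(2*j+2))*(gc^(2*j+2))^2 + (2909/625)*gr^7*(gr^(2*j+2))*(gc^(2*j+2))^3 + (-36/25)*gr^7*(gr^(2*j+2))^2*(gc^(2*j+2)) + (1623/625)*gr^7*(gr^(2*j+2))^2*(gc^(2*j+2))^2 + (6/25)*gr^7*(gr^(2*j+2))^3*(gc^(2*j+2)) + (6/25)*gr^7*gc*(gc^(2*j+2))^3 + (-2221/625)*gr^7*gc*(gc^(2*j+2))^4 + (6/25)*gr^7*gc*(gr^(2*j+2))*(gc^(2*j+2))^2 + (1218/625)*gr^7*gc*(gr^(2*j+2))*(gc^(2*j+2))^3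 + (-12/25)*gr^7*gc*(gr^(2*j+2))^2*(gc^(2*j+2)) + (966/625)*gr^7*gc*(gr^(2*j+2))^2*(gc^(2*j+2))^2 + (87/625)*gr^7*gc*(gr^(2*j+2))^3*(gc^(2*j+2)) + (-952/625)*gr^7*gc^2*(gc^(2*j+2))^4 + (376/625)*gr^7*gc^2*(gr^(2*j+2))*(gc^(2*j+2))^3 + (552/625)*gr^7*gc^2*(gr^(2*j+2))^2*(gc^(2*j+2))^2 + (24/625)*gr^7*gc^2*(gr^(2*j+2))^3*(gc^(2*j+2)) + (-344/625)*gr^7*gc^3*(gc^(2*j+2))^4 + (32/625)*gr^7*gc^3*(gr^(2*j+2))*(gc^(2*j+2))^3 + (312/625)*gr^7*gc^3*(gr^(2*j+2))^2*(gc^(2*j+2))^2 + (-96/625)*gr^7*gc^4*(gc^(2*j+2))^4 + (-48/625)*gr^7*gc^4*(gr^(2*j+2))*(gc^(2*j+2))^3 + (144/625)*gr^7*gc^4*(gr^(2*j+2))^2*(gc^(2*j+2))^2 + (-16/625)*gr^7*gc^5*(gc^(2*j+2))^4 + (-32/625)*gr^7*gc^5*(gr^(2*j+2))*(gc^(2*j+2))^3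 + (48/625)*gr^7*gc^5*(gr^(2*j+2))^2*(gc^(2*j+2))^2 + (-6/25)*gr^8*(gc^(2*j+2))^3 + (3629/625)*gr^8*(gc^(2*j+2))^4 + (-6/25)*gr^8*(gr^(2*j+2))*(gc^(2*j+2))^2 + (-1546/625)*gr^8*(gr^(2*j+2))*(gc^(2*j+2))^3 + (12/25)*gr^8*(gr^(2*j+2))^2*(gc^(2*j+2)) + (-78/25)*gr^8*(gr^(2*j+2))^2*(gc^(2*j+2))^2 + (-183/625)*gr^8*(gr^(2*j+2))^3*(gc^(2*j+2)) + (1408/625)*gr^8*gc*(gc^(2*j+2))^4 + (-328/625)*gr^8*gc*(gr^(2*j+2))*(gc^(2*j+2))^3 + (-984/625)*gr^8*gc*(gr^(2*j+2))^2*(gc^(2*j+2))^2 + (-96/625)*gr^8*gc*(gr^(2*j+2))^3*(gc^(2*j+2)) + (456/625)*gr^8*gc^2*(gc^(2*j+2))^4 + (48/625)*gr^8*gc^2*(gr^(2*j+2))*(gc^(2*j+2))^3 + (-432/625)*gr^8*gc^2*(gr^(2*j+2))^2*(gc^(2*j+2))^2 + (-72/625)*gr^8*gc^2*(gr^(2*j+2))^3*(gc^(2*j+2))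 + (112/625)*gr^8*gc^3*(gc^(2*j+2))^4 + (16/125)*gr^8*gc^3*(gr^(2*j+2))*(gc^(2*j+2))^3 + (-192/625)*gr^8*gc^3*(gr^(2*j+2))^2*(gc^(2*j+2))^2 + (16/625)*gr^8*gc^4*(gc^(2*j+2))^4 + (32/625)*gr^8*gc^4*(gr^(2*j+2))*(gc^(2*j+2))^3 + (-48/625)*gr^8*gc^4*(gr^(2*j+2))^2*(gc^(2*j+2))^2 + (-1992/625)*gr^9*(gc^(2*j+2))^4 + (168/625)*gr^9*(gr^(2*j+2))*(gc^(2*j+2))^3 + (312/125)*gr^9*(gr^(2*j+2))^2*(gc^(2*j+2))^2 + (264/625)*gr^9*(gr^(2*j+2))^3*(gc^(2*j+2)) + (-584/625)*gr^9*gc*(gc^(2*j+2))^4 + (-32/125)*gr^9*gc*(gr^(2*j+2))*(gc^(2*j+2))^3 + (576/625)*gr^9*gc*(gr^(2*j+2))^2*(gc^(2*j+2))^2 + (168/625)*gr^9*gc*(gr^(2*j+2))^3*(gc^(2*j+2)) + (-128/625)*gr^9*gc^2*(gc^(2*j+2))^4 + (-112/625)*gr^9*gc^2*(gr^(2*j+2))*(gc^(2*j+2))^3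 + (144/625)*gr^9*gc^2*(gr^(2*j+2))^2*(gc^(2*j+2))^2 + (96/625)*gr^9*gc^2*(gr^(2*j+2))^3*(gc^(2*j+2)) + (-16/625)*gr^9*gc^3*(gc^(2*j+2))^4 + (-32/625)*gr^9*gc^3*(gr^(2*j+2))*(gc^(2*j+2))^3 + (48/625)*gr^9*gc^3*(gr^(2*j+2))^2*(gc^(2*j+2))^2 + (728/625)*gr^10*(gc^(2*j+2))^4 + (304/625)*gr^10*(gr^(2*j+2))*(gc^(2*j+2))^3 + (-144/125)*gr^10*(gr^(2*j+2))^2*(gc^(2*j+2))^2 + (-312/625)*gr^10*(gr^(2*j+2))^3*(gc^(2*j+2)) + (144/625)*gr^10*gc*(gc^(2*j+2))^4 + (144/625)*gr^10*gc*(gr^(2*j+2))*(gc^(2*j+2))^3 + (-144/625)*gr^10*gc*(gr^(2*j+2))^2*(gc^(2*j+2))^2 + (-144/625)*gr^10*gc*(gr^(2*j+2))^3*(gc^(2*j+2)) + (16/625)*gr^10*gc^2*(gc^(2*j+2))^4 + (32/625)*gr^10*gc^2*(gr^(2*j+2))*(gc^(2*j+2))^3 + (-48/625)*gr^10*gc^2*(gr^(2*j+2))^3*(gc^(2*j+2))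 + (-32/125)*gr^11*(gc^(2*j+2))^4 + (-176/625)*gr^11*(gr^(2*j+2))*(gc^(2*j+2))^3 + (144/625)*gr^11*(gr^(2*j+2))^2*(gc^(2*j+2))^2 + (192/625)*gr^11*(gr^(2*j+2))^3*(gc^(2*j+2)) + (-16/625)*gr^11*gc*(gc^(2*j+2))^4 + (-32/625)*gr^11*gc*(gr^(2*j+2))*(gc^(2*j+2))^3 + (48/625)*gr^11*gc*(gr^(2*j+2))^3*(gc^(2*j+2)) + (16/625)*gr^12*(gc^(2*j+2))^4 + (32/625)*gr^12*(gr^(2*j+2))*(gc^(2*j+2))^3 + (-48/625)*gr^12*(gr^(2*j+2))^3*(gc^(2*j+2))) * hgc + ((1/5)*(gc^(2*j+2)) + (-69/100)*(gc^(2*j+2))^2 + (32/25)*(gc^(2*j+2))^3 + (-609/2500)*(gc^(2*j+2))^4 + (-1/2)*(gr^(2*j+2)) + (-331/250)*(gr^(2*j+2))*(gc^(2*j+2)) + (3/2)*(gr^(2*j+2))*(gc^(2*j+2))^2 + (-974/625)*(gr^(2*j+2))*(gc^(2*j+2))^3 + (-7/100)*(gr^(2*j+2))^2 + (39/50)*(gr^(2*j+2))^2*(gc^(2*j+2))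 + (-9/125)*(gr^(2*j+2))^2*(gc^(2*j+2))^2 + (3/10)*(gr^(2*j+2))^3 + (-79/125)*(gr^(2*j+2))^3*(gc^(2*j+2)) + (-1/20)*(gr^(2*j+2))^4 + (-7/10)*gr*(gc^(2*j+2)) + (371/500)*gr*(gc^(2*j+2))^2 + (-119/50)*gr*(gc^(2*j+2))^3 + (1447/2500)*gr*(gc^(2*j+2))^4 + (7/10)*gr*(gr^(2*j+2)) + (144/125)*gr*(gr^(2*j+2))*(gc^(2*j+2)) + (-117/50)*gr*(gr^(2*j+2))*(gc^(2*j+2))^2 + (1557/625)*gr*(gr^(2*j+2))*(gc^(2*j+2))^3 + (9/100)*gr*(gr^(2*j+2))^2 + (-27/50)*gr*(gr^(2*j+2))^2*(gc^(2*j+2)) + (9/50)*gr*(gr^(2*j+2))^2*(gc^(2*j+2))^2 + (1/5)*gr*(gr^(2*j+2))^3 + (-28/125)*gr*(gr^(2*j+2))^3*(gc^(2*j+2)) + (-3/100)*gr*(gr^(2*j+2))^4 + (581/500)*gr^2*(gc^(2*j+2))^2 + (18/25)*gr^2*(gc^(2*j+2))^3 + (-97/1250)*gr^2*(gc^(2*j+2))^4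 + (-114/125)*gr^2*(gr^(2*j+2))*(gc^(2*j+2)) + (81/25)*gr^2*(gr^(2*j+2))*(gc^(2*j+2))^2 + (-2399/625)*gr^2*(gr^(2*j+2))*(gc^(2*j+2))^3 + (-89/100)*gr^2*(gr^(2*j+2))^2 + (87/50)*gr^2*(gr^(2*j+2))^2*(gc^(2*j+2)) + (-81/125)*gr^2*(gr^(2*j+2))^2*(gc^(2*j+2))^2 + (1/10)*gr^2*(gr^(2*j+2))^3 + (-52/125)*gr^2*(gr^(2*j+2))^3*(gc^(2*j+2)) + (-1/50)*gr^2*(gr^(2*j+2))^4 + (-591/250)*gr^3*(gc^(2*j+2))^2 + (209/50)*gr^3*(gc^(2*j+2))^3 + (-6849/2500)*gr^3*(gc^(2*j+2))^4 + (-84/125)*gr^3*(gr^(2*j+2))*(gc^(2*j+2)) + (-177/50)*gr^3*(gr^(2*j+2))*(gc^(2*j+2))^2 + (3424/625)*gr^3*(gr^(2*j+2))*(gc^(2*j+2))^3 + (-9/250)*gr^3*(gr^(2*j+2))^2 + (-69/50)*gr^3*(gr^(2*j+2))^2*(gc^(2*j+2)) + (972/625)*gr^3*(gr^(2*j+2))^2*(gc^(2*j+2))^2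 + (11/50)*gr^3*(gr^(2*j+2))^3 + (-8/125)*gr^3*(gr^(2*j+2))^3*(gc^(2*j+2)) + (11/500)*gr^3*(gr^(2*j+2))^4 + (39/25)*gr^4*(gc^(2*j+2))^2 + (-69/10)*gr^4*(gc^(2*j+2))^3 + (4444/625)*gr^4*(gc^(2*j+2))^4 + (102/125)*gr^4*(gr^(2*j+2))*(gc^(2*j+2)) + (129/50)*gr^4*(gr^(2*j+2))*(gc^(2*j+2))^2 + (-4269/625)*gr^4*(gr^(2*j+2))*(gc^(2*j+2))^3 + (3/25)*gr^4*(gr^(2*j+2))^2 + (42/25)*gr^4*(gr^(2*j+2))^2*(gc^(2*j+2)) + (-687/250)*gr^4*(gr^(2*j+2))^2*(gc^(2*j+2))^2 + (1/2)*gr^4*(gr^(2*j+2))^3 + (-21/125)*gr^4*(gr^(2*j+2))^3*(gc^(2*j+2)) + (-1/10)*gr^4*(gr^(2*j+2))^4 + (-72/125)*gr^5*(gc^(2*j+2))^2 + (121/25)*gr^5*(gc^(2*j+2))^3 + (-25151/2500)*gr^5*(gc^(2*j+2))^4 + (-72/125)*gr^5*(gr^(2*j+2))*(gc^(2*j+2))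 + (-21/50)*gr^5*(gr^(2*j+2))*(gc^(2*j+2))^2 + (4253/625)*gr^5*(gr^(2*j+2))*(gc^(2*j+2))^3 + (-87/50)*gr^5*(gr^(2*j+2))^2*(gc^(2*j+2)) + (2361/625)*gr^5*(gr^(2*j+2))^2*(gc^(2*j+2))^2 + (1/5)*gr^5*(gr^(2*j+2))^3 + (7/25)*gr^5*(gr^(2*j+2))^3*(gc^(2*j+2)) + (-7/100)*gr^5*(gr^(2*j+2))^4 + (12/125)*gr^6*(gc^(2*j+2))^2 + (-42/25)*gr^6*(gc^(2*j+2))^3 + (24227/2500)*gr^6*(gc^(2*j+2))^4 + (24/125)*gr^6*(gr^(2*j+2))*(gc^(2*j+2)) + (-12/25)*gr^6*(gr^(2*j+2))*(gc^(2*j+2))^2 + (-5)*gr^6*(gr^(2*j+2))*(gc^(2*j+2))^3 + (12/125)*gr^6*(gr^(2*j+2))^2 + (6/5)*gr^6*(gr^(2*j+2))^2*(gc^(2*j+2)) + (-2691/625)*gr^6*(gr^(2*j+2))^2*(gc^(2*j+2))^2 + (-367/625)*gr^6*(gr^(2*j+2))^3*(gc^(2*j+2)) + (-21/500)*gr^6*(gr^(2*j+2))^4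 + (6/25)*gr^7*(gc^(2*j+2))^3 + (-4229/625)*gr^7*(gc^(2*j+2))^4 + (6/25)*gr^7*(gr^(2*j+2))*(gc^(2*j+2))^2 + (1354/625)*gr^7*(gr^(2*j+2))*(gc^(2*j+2))^3 + (-6/25)*gr^7*(gr^(2*j+2))^2*(gc^(2*j+2)) + (2496/625)*gr^7*(gr^(2*j+2))^2*(gc^(2*j+2))^2 + (-6/25)*gr^7*(gr^(2*j+2))^3 + (374/625)*gr^7*(gr^(2*j+2))^3*(gc^(2*j+2)) + (1/125)*gr^7*(gr^(2*j+2))^4 + (2136/625)*gr^8*(gc^(2*j+2))^4 + (-24/625)*gr^8*(gr^(2*j+2))*(gc^(2*j+2))^3 + (-1704/625)*gr^8*(gr^(2*j+2))^2*(gc^(2*j+2))^2 + (-408/625)*gr^8*(gr^(2*j+2))^3*(gc^(2*j+2)) + (-744/625)*gr^9*(gc^(2*j+2))^4 + (-336/625)*gr^9*(gr^(2*j+2))*(gc^(2*j+2))^3 + (144/125)*gr^9*(gr^(2*j+2))^2*(gc^(2*j+2))^2 + (336/625)*gr^9*(gr^(2*j+2))^3*(gc^(2*j+2)) + (24/625)*gr^9*(gr^(2*j+2))^4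 + (32/125)*gr^10*(gc^(2*j+2))^4 + (176/625)*gr^10*(gr^(2*j+2))*(gc^(2*j+2))^3 + (-144/625)*gr^10*(gr^(2*j+2))^2*(gc^(2*j+2))^2 + (-176/625)*gr^10*(gr^(2*j+2))^3*(gc^(2*j+2)) + (-16/625)*gr^10*(gr^(2*j+2))^4 + (-16/625)*gr^11*(gc^(2*j+2))^4 + (-32/625)*gr^11*(gr^(2*j+2))*(gc^(2*j+2))^3 + (32/625)*gr^11*(gr^(2*j+2))^3*(gc^(2*j+2)) + (16/625)*gr^11*(gr^(2*j+2))^4) * hf + ((-67/50) + (3/2)*(gc^(2*j+2)) + (-39/25)*(gc^(2*j+2))^2 + (3/5)*(gr^(2*j+2)) + (-3/50)*(gr^(2*j+2))*(gc^(2*j+2)) + (-3/5)*(gr^(2*j+2))^2 + (-9/10)*gr*(gc^(2*j+2)) + (24/25)*gr*(gc^(2*j+2))^2 + (9/10)*gr*(gr^(2*j+2)) + (-24/25)*gr*(gr^(2*j+2))^2) * hxz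
    refine ⟨⟨?_, ?_, ?_⟩, ?_, ?_, ?_⟩
    · rw [show 2*(j+1)+1 = 2*j+3 by omega]; exact eo1
    · rw [show 2*(j+1)+1 = 2*j+3 by omega]; exact eo2
    · rw [show 2*(j+1)+1 = 2*j+3 by omega]; exact eo3
    · rw [show 2*(j+1)+2 = 2*j+4 by omega]; exact ee1
    · rw [show 2*(j+1)+2 = 2*j+4 by omega]; exact ee2
    · rw [show 2*(j+1)+2 = 2*j+4 by omega]; exact ee3


set_option maxHeartbeats 4000000 in
theorem A'_odd_three (k : ℕ) (hk : 1 ≤ k) :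
    (∑ n ∈ Finset.Icc 1 (Nat.fib (2 * k - 1) - 1),
        (⌊((1 + Real.sqrt 5) / 2) ^ 2 * (n : ℝ)⌋ : ℝ) ^ 3) =
      (1 / 4) * ((Nat.fib (2 * k - 1) : ℝ) - 1) * ((Nat.fib (2 * k + 1) : ℝ) - 1) *
        ((1 / 5) * ((lucas (4 * k + 2) : ℝ) - 5 * (lucas (2 * k + 2) : ℝ) + 7)) := by
  obtain ⟨j, rfl⟩ : ∃ j, k = j + 1 := ⟨k - 1, by omega⟩
  rw [show 2*(j+1) - 1 = 2*j+1 by omega, show 2*(j+1) + 1 = 2*j+3 by omega,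
    show 4*(j+1) + 2 = 4*j+6 by omega, show 2*(j+1) + 2 = 2*j+4 by omega]
  have hfp : 0 < Nat.fib (2*j+1) := Nat.fib_pos.mpr (by omega)
  have hsum : (∑ n ∈ Finset.Icc 1 (Nat.fib (2*j+1) - 1),
      (⌊((1 + Real.sqrt 5) / 2) ^ 2 * (n : ℝ)⌋ : ℝ) ^ 3) = S 3 (2*j+1) := by
    simp only [show ((1 + Real.sqrt 5) / 2 : ℝ) = gr from rfl]
    simp only [show ∀ n : ℕ, ⌊gr ^ 2 * (n:ℝ)⌋ = aseq n from fun n => rfl]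
    have hIcc : Finset.Icc 1 (Nat.fib (2*j+1) - 1) = Finset.Ico 1 (Nat.fib (2*j+1)) := by
      rw [← Finset.Ico_add_one_right_eq_Icc]
      congr 1
      omega
    rw [hIcc]
    unfold S
    rw [Finset.range_eq_Ico, Finset.sum_eq_sum_Ico_succ_bot hfp, aseq_zero]
    norm_num
  rw [hsum, (main j).1.2.2, fibR' (2*j+1), fibR' (2*j+3), lucasR (4*j+6), lucasR (2*j+4)]
  have hxz := hxz_odd (2*j+1) (Nat.odd_iff.mpr (by omega))
  linear_combination ((8/25)*(gc^(2*j+1)) + (-41/250)*(gc^(2*j+1))^2 + (3/100)*(gc^(2*j+1))^3 + (-1/500)*(gc^(2*j+1))^4 + (8/125)*(gr^(2*j+1))*(gc^(2*j+1)) + (-1/50)*(gr^(2*j+1))*(gc^(2*j+1))^2 + (1/500)*(gr^(2*j+1))*(gc^(2*j+1))^3 + (8/25)*gc*(gc^(2*j+1)) + (-41/250)*gc*(gc^(2*j+1))^2 + (3/100)*gc*(gc^(2*j+1))^3 + (-1/500)*gc*(gc^(2*j+1))^4 + (8/125)*gc*(gr^(2*j+1))*(gc^(2*j+1)) + (-1/50)*gc*(gr^(2*j+1))*(gc^(2*j+1))^2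 + (1/500)*gc*(gr^(2*j+1))*(gc^(2*j+1))^3 + (1/4)*gc^2*(gc^(2*j+1)) + (-3/20)*gc^2*(gc^(2*j+1))^2 + (3/100)*gc^2*(gc^(2*j+1))^3 + (-1/500)*gc^2*(gc^(2*j+1))^4 + (1/20)*gc^2*(gr^(2*j+1))*(gc^(2*j+1)) + (-1/50)*gc^2*(gr^(2*j+1))*(gc^(2*j+1))^2 + (1/500)*gc^2*(gr^(2*j+1))*(gc^(2*j+1))^3 + (-1/10)*gc^3*(gc^(2*j+1))^2 + (3/100)*gc^3*(gc^(2*j+1))^3 + (-1/500)*gc^3*(gc^(2*j+1))^4 + (-1/50)*gc^3*(gr^(2*j+1))*(gc^(2*j+1))^2 + (1/500)*gc^3*(gr^(2*j+1))*(gc^(2*j+1))^3 + (-1/20)*gc^4*(gc^(2*j+1))^2 + (1/50)*gc^4*(gc^(2*j+1))^3 + (-1/500)*gc^4*(gc^(2*j+1))^4 + (-1/100)*gc^4*(gr^(2*j+1))*(gc^(2*j+1))^2 + (1/500)*gc^4*(gr^(2*j+1))*(gc^(2*j+1))^3 + (1/100)*gc^5*(gc^(2*j+1))^3 + (-1/500)*gc^5*(gc^(2*j+1))^4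 + (1/500)*gc^5*(gr^(2*j+1))*(gc^(2*j+1))^3 + (-71/100)*gr*(gc^(2*j+1)) + (18/25)*gr*(gc^(2*j+1))^2 + (-1/5)*gr*(gc^(2*j+1))^3 + (9/500)*gr*(gc^(2*j+1))^4 + (-27/100)*gr*(gr^(2*j+1))*(gc^(2*j+1)) + (13/100)*gr*(gr^(2*j+1))*(gc^(2*j+1))^2 + (-9/500)*gr*(gr^(2*j+1))*(gc^(2*j+1))^3 + (-39/100)*gr*gc*(gc^(2*j+1)) + (139/250)*gr*gc*(gc^(2*j+1))^2 + (-17/100)*gr*gc*(gc^(2*j+1))^3 + (2/125)*gr*gc*(gc^(2*j+1))^4 + (-103/500)*gr*gc*(gr^(2*j+1))*(gc^(2*j+1)) + (11/100)*gr*gc*(gr^(2*j+1))*(gc^(2*j+1))^2 + (-2/125)*gr*gc*(gr^(2*j+1))*(gc^(2*j+1))^3 + (7/20)*gr*gc^2*(gc^(2*j+1))^2 + (-7/50)*gr*gc^2*(gc^(2*j+1))^3 + (7/500)*gr*gc^2*(gc^(2*j+1))^4 + (-1/10)*gr*gc^2*(gr^(2*j+1))*(gc^(2*j+1)) + (9/100)*gr*gc^2*(gr^(2*j+1))*(gc^(2*j+1))^2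 + (-7/500)*gr*gc^2*(gr^(2*j+1))*(gc^(2*j+1))^3 + (3/20)*gr*gc^3*(gc^(2*j+1))^2 + (-11/100)*gr*gc^3*(gc^(2*j+1))^3 + (3/250)*gr*gc^3*(gc^(2*j+1))^4 + (7/100)*gr*gc^3*(gr^(2*j+1))*(gc^(2*j+1))^2 + (-3/250)*gr*gc^3*(gr^(2*j+1))*(gc^(2*j+1))^3 + (1/10)*gr*gc^4*(gc^(2*j+1))^2 + (-7/100)*gr*gc^4*(gc^(2*j+1))^3 + (1/100)*gr*gc^4*(gc^(2*j+1))^4 + (1/25)*gr*gc^4*(gr^(2*j+1))*(gc^(2*j+1))^2 + (-1/100)*gr*gc^4*(gr^(2*j+1))*(gc^(2*j+1))^3 + (-1/50)*gr*gc^5*(gc^(2*j+1))^3 + (1/125)*gr*gc^5*(gc^(2*j+1))^4 + (-1/125)*gr*gc^5*(gr^(2*j+1))*(gc^(2*j+1))^3 + (39/100)*gr^2*(gc^(2*j+1)) + (-303/250)*gr^2*(gc^(2*j+1))^2 + (11/20)*gr^2*(gc^(2*j+1))^3 + (-17/250)*gr^2*(gc^(2*j+1))^4 + (103/250)*gr^2*(gr^(2*j+1))*(gc^(2*j+1))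 + (-37/100)*gr^2*(gr^(2*j+1))*(gc^(2*j+1))^2 + (7/100)*gr^2*(gr^(2*j+1))*(gc^(2*j+1))^3 + (1/100)*gr^2*(gr^(2*j+1))^2*(gc^(2*j+1)) + (-1/500)*gr^2*(gr^(2*j+1))^2*(gc^(2*j+1))^2 + (-82/125)*gr^2*gc*(gc^(2*j+1))^2 + (19/50)*gr^2*gc*(gc^(2*j+1))^3 + (-13/250)*gr^2*gc*(gc^(2*j+1))^4 + (103/500)*gr^2*gc*(gr^(2*j+1))*(gc^(2*j+1)) + (-13/50)*gr^2*gc*(gr^(2*j+1))*(gc^(2*j+1))^2 + (27/500)*gr^2*gc*(gr^(2*j+1))*(gc^(2*j+1))^3 + (1/100)*gr^2*gc*(gr^(2*j+1))^2*(gc^(2*j+1)) + (-1/500)*gr^2*gc*(gr^(2*j+1))^2*(gc^(2*j+1))^2 + (-1/4)*gr^2*gc^2*(gc^(2*j+1))^2 + (6/25)*gr^2*gc^2*(gc^(2*j+1))^3 + (-19/500)*gr^2*gc^2*(gc^(2*j+1))^4 + (1/20)*gr^2*gc^2*(gr^(2*j+1))*(gc^(2*j+1)) + (-17/100)*gr^2*gc^2*(gr^(2*j+1))*(gc^(2*j+1))^2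 + (1/25)*gr^2*gc^2*(gr^(2*j+1))*(gc^(2*j+1))^3 + (1/100)*gr^2*gc^2*(gr^(2*j+1))^2*(gc^(2*j+1)) + (-1/500)*gr^2*gc^2*(gr^(2*j+1))^2*(gc^(2*j+1))^2 + (-1/10)*gr^2*gc^3*(gc^(2*j+1))^2 + (13/100)*gr^2*gc^3*(gc^(2*j+1))^3 + (-13/500)*gr^2*gc^3*(gc^(2*j+1))^4 + (-9/100)*gr^2*gc^3*(gr^(2*j+1))*(gc^(2*j+1))^2 + (7/250)*gr^2*gc^3*(gr^(2*j+1))*(gc^(2*j+1))^3 + (-1/500)*gr^2*gc^3*(gr^(2*j+1))^2*(gc^(2*j+1))^2 + (3/50)*gr^2*gc^4*(gc^(2*j+1))^3 + (-2/125)*gr^2*gc^4*(gc^(2*j+1))^4 + (-1/25)*gr^2*gc^4*(gr^(2*j+1))*(gc^(2*j+1))^2 + (2/125)*gr^2*gc^4*(gr^(2*j+1))*(gc^(2*j+1))^3 + (-1/125)*gr^2*gc^5*(gc^(2*j+1))^4 + (1/125)*gr^2*gc^5*(gr^(2*j+1))*(gc^(2*j+1))^3 + (503/500)*gr^3*(gc^(2*j+1))^2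 + (-81/100)*gr^3*(gc^(2*j+1))^3 + (7/50)*gr^3*(gc^(2*j+1))^4 + (-203/500)*gr^3*(gr^(2*j+1))*(gc^(2*j+1)) + (63/100)*gr^3*(gr^(2*j+1))*(gc^(2*j+1))^2 + (-77/500)*gr^3*(gr^(2*j+1))*(gc^(2*j+1))^3 + (-7/100)*gr^3*(gr^(2*j+1))^2*(gc^(2*j+1)) + (7/500)*gr^3*(gr^(2*j+1))^2*(gc^(2*j+1))^2 + (7/20)*gr^3*gc*(gc^(2*j+1))^2 + (-43/100)*gr^3*gc*(gc^(2*j+1))^3 + (11/125)*gr^3*gc*(gc^(2*j+1))^4 + (-1/5)*gr^3*gc*(gr^(2*j+1))*(gc^(2*j+1)) + (37/100)*gr^3*gc*(gr^(2*j+1))*(gc^(2*j+1))^2 + (-1/10)*gr^3*gc*(gr^(2*j+1))*(gc^(2*j+1))^3 + (-3/50)*gr^3*gc*(gr^(2*j+1))^2*(gc^(2*j+1)) + (3/250)*gr^3*gc*(gr^(2*j+1))^2*(gc^(2*j+1))^2 + (1/10)*gr^3*gc^2*(gc^(2*j+1))^2 + (-19/100)*gr^3*gc^2*(gc^(2*j+1))^3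 + (1/20)*gr^3*gc^2*(gc^(2*j+1))^4 + (-1/10)*gr^3*gc^2*(gr^(2*j+1))*(gc^(2*j+1)) + (19/100)*gr^3*gc^2*(gr^(2*j+1))*(gc^(2*j+1))^2 + (-3/50)*gr^3*gc^2*(gr^(2*j+1))*(gc^(2*j+1))^3 + (-1/25)*gr^3*gc^2*(gr^(2*j+1))^2*(gc^(2*j+1)) + (1/100)*gr^3*gc^2*(gr^(2*j+1))^2*(gc^(2*j+1))^2 + (-3/50)*gr^3*gc^3*(gc^(2*j+1))^3 + (3/125)*gr^3*gc^3*(gc^(2*j+1))^4 + (3/50)*gr^3*gc^3*(gr^(2*j+1))*(gc^(2*j+1))^2 + (-4/125)*gr^3*gc^3*(gr^(2*j+1))*(gc^(2*j+1))^3 + (1/125)*gr^3*gc^3*(gr^(2*j+1))^2*(gc^(2*j+1))^2 + (1/125)*gr^3*gc^4*(gc^(2*j+1))^4 + (-1/125)*gr^3*gc^4*(gr^(2*j+1))*(gc^(2*j+1))^3 + (-9/20)*gr^4*(gc^(2*j+1))^2 + (17/25)*gr^4*(gc^(2*j+1))^3 + (-17/100)*gr^4*(gc^(2*j+1))^4 +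 (2/5)*gr^4*(gr^(2*j+1))*(gc^(2*j+1)) + (-7/10)*gr^4*(gr^(2*j+1))*(gc^(2*j+1))^2 + (26/125)*gr^4*(gr^(2*j+1))*(gc^(2*j+1))^3 + (19/100)*gr^4*(gr^(2*j+1))^2*(gc^(2*j+1)) + (-1/25)*gr^4*(gr^(2*j+1))^2*(gc^(2*j+1))^2 + (1/500)*gr^4*(gr^(2*j+1))^3*(gc^(2*j+1)) + (-1/10)*gr^4*gc*(gc^(2*j+1))^2 + (1/4)*gr^4*gc*(gc^(2*j+1))^3 + (-41/500)*gr^4*gc*(gc^(2*j+1))^4 + (1/5)*gr^4*gc*(gr^(2*j+1))*(gc^(2*j+1)) + (-33/100)*gr^4*gc*(gr^(2*j+1))*(gc^(2*j+1))^2 + (27/250)*gr^4*gc*(gr^(2*j+1))*(gc^(2*j+1))^3 + (13/100)*gr^4*gc*(gr^(2*j+1))^2*(gc^(2*j+1)) + (-7/250)*gr^4*gc*(gr^(2*j+1))^2*(gc^(2*j+1))^2 + (1/500)*gr^4*gc*(gr^(2*j+1))^3*(gc^(2*j+1)) + (3/50)*gr^4*gc^2*(gc^(2*j+1))^3 + (-4/125)*gr^4*gc^2*(gc^(2*j+1))^4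 + (-1/10)*gr^4*gc^2*(gr^(2*j+1))*(gc^(2*j+1))^2 + (6/125)*gr^4*gc^2*(gr^(2*j+1))*(gc^(2*j+1))^3 + (1/25)*gr^4*gc^2*(gr^(2*j+1))^2*(gc^(2*j+1)) + (-2/125)*gr^4*gc^2*(gr^(2*j+1))^2*(gc^(2*j+1))^2 + (-1/125)*gr^4*gc^3*(gc^(2*j+1))^4 + (2/125)*gr^4*gc^3*(gr^(2*j+1))*(gc^(2*j+1))^3 + (-1/125)*gr^4*gc^3*(gr^(2*j+1))^2*(gc^(2*j+1))^2 + (1/10)*gr^5*(gc^(2*j+1))^2 + (-31/100)*gr^5*(gc^(2*j+1))^3 + (61/500)*gr^5*(gc^(2*j+1))^4 + (-1/5)*gr^5*(gr^(2*j+1))*(gc^(2*j+1)) + (47/100)*gr^5*(gr^(2*j+1))*(gc^(2*j+1))^2 + (-43/250)*gr^5*(gr^(2*j+1))*(gc^(2*j+1))^3 + (-23/100)*gr^5*(gr^(2*j+1))^2*(gc^(2*j+1)) + (3/50)*gr^5*(gr^(2*j+1))^2*(gc^(2*j+1))^2 + (-1/100)*gr^5*(gr^(2*j+1))^3*(gc^(2*j+1))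 + (-3/50)*gr^5*gc*(gc^(2*j+1))^3 + (1/25)*gr^5*gc*(gc^(2*j+1))^4 + (7/50)*gr^5*gc*(gr^(2*j+1))*(gc^(2*j+1))^2 + (-8/125)*gr^5*gc*(gr^(2*j+1))*(gc^(2*j+1))^3 + (-1/10)*gr^5*gc*(gr^(2*j+1))^2*(gc^(2*j+1)) + (4/125)*gr^5*gc*(gr^(2*j+1))^2*(gc^(2*j+1))^2 + (-1/125)*gr^5*gc*(gr^(2*j+1))^3*(gc^(2*j+1)) + (1/125)*gr^5*gc^2*(gc^(2*j+1))^4 + (-2/125)*gr^5*gc^2*(gr^(2*j+1))*(gc^(2*j+1))^3 + (1/125)*gr^5*gc^2*(gr^(2*j+1))^2*(gc^(2*j+1))^2 + (3/50)*gr^6*(gc^(2*j+1))^3 + (-6/125)*gr^6*(gc^(2*j+1))^4 + (-7/50)*gr^6*(gr^(2*j+1))*(gc^(2*j+1))^2 + (2/25)*gr^6*(gr^(2*j+1))*(gc^(2*j+1))^3 + (1/10)*gr^6*(gr^(2*j+1))^2*(gc^(2*j+1)) + (-6/125)*gr^6*(gr^(2*j+1))^2*(gc^(2*j+1))^2 +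 (2/125)*gr^6*(gr^(2*j+1))^3*(gc^(2*j+1)) + (-1/125)*gr^6*gc*(gc^(2*j+1))^4 + (2/125)*gr^6*gc*(gr^(2*j+1))*(gc^(2*j+1))^3 + (-2/125)*gr^6*gc*(gr^(2*j+1))^2*(gc^(2*j+1))^2 + (1/125)*gr^6*gc*(gr^(2*j+1))^3*(gc^(2*j+1)) + (1/125)*gr^7*(gc^(2*j+1))^4 + (-2/125)*gr^7*(gr^(2*j+1))*(gc^(2*j+1))^3 + (2/125)*gr^7*(gr^(2*j+1))^2*(gc^(2*j+1))^2 + (-1/125)*gr^7*(gr^(2*j+1))^3*(gc^(2*j+1))) * hgc + ((71/100)*(gc^(2*j+1)) + (-369/250)*(gc^(2*j+1))^2 + (77/100)*(gc^(2*j+1))^3 + (-16/125)*(gc^(2*j+1))^4 + (8/25)*(gr^(2*j+1)) + (112/125)*(gr^(2*j+1))*(gc^(2*j+1)) + (-29/50)*(gr^(2*j+1))*(gc^(2*j+1))^2 + (37/250)*(gr^(2*j+1))*(gc^(2*j+1))^3 + (-67/100)*(gr^(2*j+1))^2 + (-3/20)*(gr^(2*j+1))^2*(gc^(2*j+1)) +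 (-3/100)*(gr^(2*j+1))^2*(gc^(2*j+1))^2 + (3/10)*(gr^(2*j+1))^3 + (3/50)*(gr^(2*j+1))^3*(gc^(2*j+1)) + (-1/20)*(gr^(2*j+1))^4 + (-39/100)*gr*(gc^(2*j+1)) + (781/500)*gr*(gc^(2*j+1))^2 + (-26/25)*gr*(gc^(2*j+1))^3 + (47/250)*gr*(gc^(2*j+1))^4 + (39/100)*gr*(gr^(2*j+1)) + (-281/500)*gr*(gr^(2*j+1))*(gc^(2*j+1)) + (22/25)*gr*(gr^(2*j+1))*(gc^(2*j+1))^2 + (-109/500)*gr*(gr^(2*j+1))*(gc^(2*j+1))^3 + (-3/10)*gr*(gr^(2*j+1))^2 + (-3/10)*gr*(gr^(2*j+1))^2*(gc^(2*j+1)) + (3/100)*gr*(gr^(2*j+1))^2*(gc^(2*j+1))^2 + (1/5)*gr*(gr^(2*j+1))^3 + (3/100)*gr*(gr^(2*j+1))^3*(gc^(2*j+1)) + (-3/100)*gr*(gr^(2*j+1))^4 + (-553/500)*gr^2*(gc^(2*j+1))^2 + (53/50)*gr^2*(gc^(2*j+1))^3 + (-23/100)*gr^2*(gc^(2*j+1))^4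 + (381/500)*gr^2*(gr^(2*j+1))*(gc^(2*j+1)) + (-24/25)*gr^2*(gr^(2*j+1))*(gc^(2*j+1))^2 + (139/500)*gr^2*(gr^(2*j+1))*(gc^(2*j+1))^3 + (-89/250)*gr^2*(gr^(2*j+1))^2 + (7/50)*gr^2*(gr^(2*j+1))^2*(gc^(2*j+1)) + (-29/500)*gr^2*(gr^(2*j+1))^2*(gc^(2*j+1))^2 + (1/10)*gr^2*(gr^(2*j+1))^3 + (3/100)*gr^2*(gr^(2*j+1))^3*(gc^(2*j+1)) + (-1/50)*gr^2*(gr^(2*j+1))^4 + (9/20)*gr^3*(gc^(2*j+1))^2 + (-37/50)*gr^3*(gc^(2*j+1))^3 + (21/100)*gr^3*(gc^(2*j+1))^4 + (-2/5)*gr^3*(gr^(2*j+1))*(gc^(2*j+1)) + (21/25)*gr^3*(gr^(2*j+1))*(gc^(2*j+1))^2 + (-34/125)*gr^3*(gr^(2*j+1))*(gc^(2*j+1))^3 + (-1/20)*gr^3*(gr^(2*j+1))^2 + (-9/25)*gr^3*(gr^(2*j+1))^2*(gc^(2*j+1)) + (9/125)*gr^3*(gr^(2*j+1))^2*(gc^(2*j+1))^2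 + (1/10)*gr^3*(gr^(2*j+1))^3 + (-1/100)*gr^3*(gr^(2*j+1))^4 + (-1/10)*gr^4*(gc^(2*j+1))^2 + (31/100)*gr^4*(gc^(2*j+1))^3 + (-13/100)*gr^4*(gc^(2*j+1))^4 + (1/5)*gr^4*(gr^(2*j+1))*(gc^(2*j+1)) + (-47/100)*gr^4*(gr^(2*j+1))*(gc^(2*j+1))^2 + (47/250)*gr^4*(gr^(2*j+1))*(gc^(2*j+1))^3 + (-1/10)*gr^4*(gr^(2*j+1))^2 + (23/100)*gr^4*(gr^(2*j+1))^2*(gc^(2*j+1)) + (-19/250)*gr^4*(gr^(2*j+1))^2*(gc^(2*j+1))^2 + (1/100)*gr^4*(gr^(2*j+1))^3 + (7/250)*gr^4*(gr^(2*j+1))^3*(gc^(2*j+1)) + (-1/100)*gr^4*(gr^(2*j+1))^4 + (-3/50)*gr^5*(gc^(2*j+1))^3 + (6/125)*gr^5*(gc^(2*j+1))^4 + (7/50)*gr^5*(gr^(2*j+1))*(gc^(2*j+1))^2 + (-2/25)*gr^5*(gr^(2*j+1))*(gc^(2*j+1))^3 + (-7/50)*gr^5*(gr^(2*j+1))^2*(gc^(2*j+1))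 + (6/125)*gr^5*(gr^(2*j+1))^2*(gc^(2*j+1))^2 + (3/50)*gr^5*(gr^(2*j+1))^3 + (-2/125)*gr^5*(gr^(2*j+1))^3*(gc^(2*j+1)) + (-1/125)*gr^6*(gc^(2*j+1))^4 + (2/125)*gr^6*(gr^(2*j+1))*(gc^(2*j+1))^3 + (-2/125)*gr^6*(gr^(2*j+1))^2*(gc^(2*j+1))^2 + (2/125)*gr^6*(gr^(2*j+1))^3*(gc^(2*j+1)) + (-1/125)*gr^6*(gr^(2*j+1))^4) * hf + ((99/100) + (-3/5)*(gc^(2*j+1)) + (3/20)*(gc^(2*j+1))^2 + (-3/20)*(gr^(2*j+1)) + (-3/100)*(gr^(2*j+1))*(gc^(2*j+1)) + (3/50)*(gr^(2*j+1))^2 + (9/20)*gr*(gc^(2*j+1)) + (-9/100)*gr*(gc^(2*j+1))^2 + (-9/20)*gr*(gr^(2*j+1)) + (9/100)*gr*(gr^(2*j+1))^2) * hxz
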